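/- arXiv:2402.04134 — 5 statements merged into one kernel-verified Lean document; each statement's English description precedes it below -/
import Mathlib

section
/- Let k be an infinite field and A a ⟨σ⟩-Galois algebra over k of dimension r. Then there exist polynomials g, p ∈ k[t] with deg g = r and deg p ≤ r−1 such that the skew polynomial ring A[x,σ] is isomorphic as a k-algebra to k⟨A,X⟩/I, where k⟨A,X⟩ is the free (non-commutative) associative k-algebra on two generators A, X and I is the two-sided ideal generated by g(A) and X·A − p(A)·X. Concretely, one may take a primitive element a ∈ A with A = k[a], g the minimal polynomial of a over k, and p with p(a) = σ(a); the isomorphism sends a ↦ A and x ↦ X. -/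
set_option maxHeartbeats 1000000
set_option synthInstance.maxHeartbeats 200000


open scoped TensorProduct

universe u v

structure IsGaloisAlgebra (k A : Type u) [Field k] [CommRing A] [Algebra k A]
    (σ : A ≃ₐ[k] A) : Prop where
  formallyEtale : Algebra.FormallyEtale k A
  finiteDimensional : FiniteDimensional k A
  fixed_iff : ∀ a : A, σ a = a ↔ a ∈ Set.range (algebraMap k A)
  orderOf_eq : orderOf σ = Module.finrank k A
  one_lt_finrank : 1 < Module.finrank k A


/-- The `k`-linear operator on `ℕ →₀ A` representing the skew monomial `a·xⁱ` in `A[x,σ]`: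
it sends `single j b` to `single (j+i) (a * σ^i b)`.  (The skew polynomial ring acts
faithfully on `ℕ →₀ A`, the module of coefficient sequences, by skewed multiplication.) -/
noncomputable def skewOp (k A : Type*) [Field k] [CommRing A] [Algebra k A]
    (σ : A ≃ₐ[k] A) (a : A) (i : ℕ) : Module.End k (ℕ →₀ A) :=
  (Finsupp.lmapDomain A k (· + i)) ∘ₗ
    (Finsupp.mapRange.linearMap (((Algebra.lmul k A) a) ∘ₗ ((σ ^ i : A ≃ₐ[k] A)).toLinearMap))

/-- The skew polynomial ring `A[x,σ]`, realized faithfully as the `k`-subalgebra of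
`End_k (ℕ →₀ A)` generated by the operators of the skew monomials `a·xⁱ` (equivalently,
the `k`-span of these operators, since `skewOp a i ∘ skewOp b j = skewOp (a·σⁱ(b)) (i+j)`). -/
noncomputable def SkewPolyAlg (k A : Type*) [Field k] [CommRing A] [Algebra k A]
    (σ : A ≃ₐ[k] A) : Subalgebra k (Module.End k (ℕ →₀ A)) :=
  Algebra.adjoin k (Set.range fun p : A × ℕ => skewOp k A σ p.1 p.2)

noncomputable instance (k A : Type*) [Field k] [CommRing A] [Algebra k A] (σ : A ≃ₐ[k] A) :
    Ring ↥(SkewPolyAlg k A σ) :=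
  letI : Ring (Module.End k (ℕ →₀ A)) := inferInstance
  inferInstance

/-- The element `x` of the skew polynomial ring `A[x,σ]`. -/
noncomputable def skewX (k A : Type*) [Field k] [CommRing A] [Algebra k A]
    (σ : A ≃ₐ[k] A) : ↥(SkewPolyAlg k A σ) :=
  ⟨skewOp k A σ 1 1, Algebra.subset_adjoin ⟨(1, 1), rfl⟩⟩

/-- The constant skew polynomial `a ∈ A`, as an element of `A[x,σ]`. -/
noncomputable def skewC (k A : Type*) [Field k] [CommRing A] [Algebra k A]
    (σ : A ≃ₐ[k] A) (a : A) : ↥(SkewPolyAlg k A σ) :=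
  ⟨skewOp k A σ a 0, Algebra.subset_adjoin ⟨(a, 0), rfl⟩⟩


/-- The relation on `k⟨X,A⟩` (free algebra on two generators, `X := ι 0`, `A := ι 1`)
generating the two-sided ideal `I = (g(A), X·A − p(A)·X)`. -/
inductive presRel (k : Type u) [Field k] (g p : Polynomial k) :
    FreeAlgebra k (Fin 2) → FreeAlgebra k (Fin 2) → Prop
  | gA : presRel k g p (Polynomial.aeval (FreeAlgebra.ι k (1 : Fin 2)) g) 0
  | XA : presRel k g p (FreeAlgebra.ι k (0 : Fin 2) * FreeAlgebra.ι k (1 : Fin 2))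
      (Polynomial.aeval (FreeAlgebra.ι k (1 : Fin 2)) p * FreeAlgebra.ι k (0 : Fin 2))



section PrimElt
open Polynomial

lemma exists_primitive (k A : Type u) [Field k] [Infinite k] [CommRing A] [Algebra k A]
    [Nontrivial A] [FiniteDimensional k A] [Algebra.FormallyUnramified k A] :
    ∃ a : A, Algebra.adjoin k {a} = ⊤ ∧ (minpoly k a).natDegree = Module.finrank k A := by
  classical
  haveI : IsArtinianRing A := IsArtinianRing.of_finite k A
  haveI : IsReduced A := Algebra.FormallyUnramified.isReduced_of_field k A
  haveI : Finite {I : Ideal A | I.IsMaximal} := (IsArtinianRing.setOfPred_isMaximal_finite A).to_subtype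
  haveI : Fintype {I : Ideal A | I.IsMaximal} := Fintype.ofFinite _
  letI : ∀ I : {I : Ideal A | I.IsMaximal}, Field (A ⧸ I.1) :=
    fun I => haveI : I.1.IsMaximal := I.2; Ideal.Quotient.field I.1
  haveI : ∀ I : {I : Ideal A | I.IsMaximal}, FiniteDimensional k (A ⧸ I.1) := fun I =>
    Module.Finite.of_surjective (Ideal.Quotient.mkₐ k I.1).toLinearMap
      Ideal.Quotient.mk_surjective
  haveI : ∀ I : {I : Ideal A | I.IsMaximal}, Algebra.IsSeparable k (A ⧸ I.1) := fun I =>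
    Algebra.FormallyUnramified.isSeparable k _
  let Φ : A →ₐ[k] ((I : {I : Ideal A | I.IsMaximal}) → A ⧸ I.1) :=
    Pi.algHom k _ (fun I => Ideal.Quotient.mkₐ k I.1)
  have hinj : Function.Injective Φ := by
    rw [injective_iff_map_eq_zero]
    intro x hx
    have hnil : IsNilpotent x := by
      rw [nilpotent_iff_mem_prime]
      intro J hJ
      haveI hJm : J.IsMaximal := (IsArtinianRing.isPrime_iff_isMaximal J).mp hJ
      have := congrFun hx ⟨J, hJm⟩
      exact (Ideal.Quotient.eq_zero_iff_mem).mp this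
    exact hnil.eq_zero
  have hsurj : Function.Surjective Φ := by
    intro y
    have hco : Pairwise (Function.onFun IsCoprime (fun I : {I : Ideal A | I.IsMaximal} => I.1)) := by
      intro I J hIJ
      exact Ideal.isCoprime_iff_sup_eq.mpr <| I.2.coprime_of_ne J.2 (Subtype.coe_injective.ne hIJ)
    obtain ⟨z, hz⟩ := Ideal.quotientInfToPiQuotient_surj hco y
    obtain ⟨x, rfl⟩ := Ideal.Quotient.mk_surjective z
    refine ⟨x, ?_⟩
    funext I
    have := congrFun hz I
    rwa [Ideal.quotientInfToPiQuotient_mk'] at this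
  have hrank : Module.finrank k A = ∑ I : {I : Ideal A | I.IsMaximal}, Module.finrank k (A ⧸ I.1) := by
    rw [(AlgEquiv.ofBijective Φ ⟨hinj, hsurj⟩).toLinearEquiv.finrank_eq,
      Module.finrank_pi_fintype]
  -- algebra homs to the algebraic closure
  set K := AlgebraicClosure k with hK
  let J := (I : {I : Ideal A | I.IsMaximal}) × ((A ⧸ I.1) →ₐ[k] K)
  have key : ∀ (I : {I : Ideal A | I.IsMaximal}) (χ : (A ⧸ I.1) →ₐ[k] K) (x : A),
      χ (Ideal.Quotient.mk I.1 x) = 0 ↔ x ∈ I.1 := by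
    intro I χ x
    constructor
    · intro h0
      rw [← Ideal.Quotient.eq_zero_iff_mem]
      exact RingHom.injective (χ : (A ⧸ I.1) →+* K)
        (show χ _ = χ 0 by rw [map_zero]; exact h0)
    · intro hx
      rw [Ideal.Quotient.eq_zero_iff_mem.mpr hx, map_zero]
  let φ : J → (A →ₐ[k] K) := fun j => j.2.comp (Ideal.Quotient.mkₐ k j.1.1)
  have hφ : Function.Injective φ := by
    rintro ⟨I, χ⟩ ⟨I', χ'⟩ h
    have hII' : I = I' := by
      apply Subtype.ext
      ext x
      have h1 : x ∈ I.1 ↔ φ ⟨I, χ⟩ x = 0 := (key I χ x).symm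
      have h2 : x ∈ I'.1 ↔ φ ⟨I', χ'⟩ x = 0 := (key I' χ' x).symm
      rw [h1, h2, h]
    subst hII'
    have hχ : χ = χ' := by
      apply AlgHom.ext
      intro z
      obtain ⟨x, rfl⟩ := Ideal.Quotient.mk_surjective z
      exact congrArg (fun (f : A →ₐ[k] K) => f x) h
    rw [hχ]
  -- choose a point separating the homs
  obtain ⟨a, ha⟩ : ∃ a : A, ∀ p : {p : J × J // p.1 ≠ p.2}, φ p.1.1 a ≠ φ p.1.2 a := by
    by_contra hcon
    push_neg at hcon
    have hcover : ⋃ p : {p : J × J // p.1 ≠ p.2},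
        ((LinearMap.ker ((φ p.1.1).toLinearMap - (φ p.1.2).toLinearMap) : Subspace k A) : Set A)
          = Set.univ := by
      apply Set.eq_univ_of_forall
      intro x
      obtain ⟨⟨p, hp⟩, hpx⟩ := hcon x
      refine Set.mem_iUnion.mpr ⟨⟨p, hp⟩, ?_⟩
      simp only [SetLike.mem_coe, LinearMap.mem_ker, LinearMap.sub_apply, AlgHom.toLinearMap_apply,
        sub_eq_zero]
      exact hpx
    obtain ⟨p, hp⟩ := Subspace.exists_eq_top_of_iUnion_eq_univ hcover
    have : φ p.1.1 = φ p.1.2 := by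
      apply AlgHom.ext
      intro x
      have : x ∈ (⊤ : Subspace k A) := trivial
      rw [← hp] at this
      simpa [sub_eq_zero] using this
    exact p.2 (hφ this)
  have hint : IsIntegral k a := Algebra.IsIntegral.isIntegral a
  -- each hom value is a root of minpoly
  have hroot : ∀ j : J, ((minpoly k a).map (algebraMap k K)).IsRoot (φ j a) := by
    intro j
    rw [Polynomial.IsRoot, Polynomial.eval_map, ← Polynomial.aeval_def,
      Polynomial.aeval_algHom_apply, minpoly.aeval, map_zero]
  have hinj2 : Function.Injective fun j : J => φ j a := by
    intro j1 j2 h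
    by_contra hne
    exact ha ⟨(j1, j2), hne⟩ h
  have hcard : Fintype.card J ≤ (minpoly k a).natDegree := by
    have hmapne : (minpoly k a).map (algebraMap k K) ≠ 0 :=
      Polynomial.map_ne_zero (minpoly.ne_zero hint)
    have hsub : Finset.univ.image (fun j : J => φ j a) ⊆
        ((minpoly k a).map (algebraMap k K)).roots.toFinset := by
      intro x hx
      obtain ⟨j, _, rfl⟩ := Finset.mem_image.mp hx
      rw [Multiset.mem_toFinset, Polynomial.mem_roots hmapne]
      exact hroot j
    calc Fintype.card J = (Finset.univ.image (fun j : J => φ j a)).card := by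
          rw [Finset.card_image_of_injective _ hinj2, Finset.card_univ]
      _ ≤ ((minpoly k a).map (algebraMap k K)).roots.toFinset.card := Finset.card_le_card hsub
      _ ≤ Multiset.card ((minpoly k a).map (algebraMap k K)).roots := Multiset.toFinset_card_le _
      _ ≤ ((minpoly k a).map (algebraMap k K)).natDegree := Polynomial.card_roots' _
      _ = (minpoly k a).natDegree := (minpoly.monic hint).natDegree_map _
  have hJcard : Fintype.card J = Module.finrank k A := by
    have hcs : Fintype.card J =
        ∑ I : {I : Ideal A | I.IsMaximal}, Fintype.card ((A ⧸ I.1) →ₐ[k] K) := by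
      exact Fintype.card_sigma
    rw [hcs, hrank]
    exact Finset.sum_congr rfl fun I _ => AlgHom.card k (A ⧸ I.1) K
  have hdeg_le : (minpoly k a).natDegree ≤ Module.finrank k A := by
    simpa using (linearIndependent_pow (K := k) a).fintype_card_le_finrank
  have hdeg : (minpoly k a).natDegree = Module.finrank k A :=
    le_antisymm hdeg_le (hJcard ▸ hcard)
  have hspan : Submodule.span k (Set.range fun i : Fin (minpoly k a).natDegree =>
      a ^ (i : ℕ)) = ⊤ := by
    apply Submodule.eq_top_of_finrank_eq
    rw [finrank_span_eq_card (linearIndependent_pow a)]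
    simpa using hdeg
  have htop : Algebra.adjoin k {a} = ⊤ := by
    rw [← Algebra.toSubmodule_eq_top]
    apply top_unique
    rw [← hspan]
    apply Submodule.span_le.mpr
    rintro _ ⟨i, rfl⟩
    exact pow_mem (Algebra.self_mem_adjoin_singleton k a) _
  exact ⟨a, htop, hdeg⟩

end PrimElt

section SkewLemmas

variable (k A : Type u) [Field k] [CommRing A] [Algebra k A] (σ : A ≃ₐ[k] A)

lemma skewOp_single (a : A) (i : ℕ) (n : ℕ) (c : A) :
    skewOp k A σ a i (Finsupp.single n c) =
      Finsupp.single (n + i) (a * (σ ^ i : A ≃ₐ[k] A) c) := by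
  simp only [skewOp, LinearMap.comp_apply, Finsupp.mapRange.linearMap_apply,
    Finsupp.mapRange_single, Finsupp.lmapDomain_apply, Finsupp.mapDomain_single,
    AlgEquiv.toLinearMap_apply, Algebra.coe_lmul_eq_mul, LinearMap.mul_apply']

lemma skewOp_mul (a b : A) (i j : ℕ) :
    skewOp k A σ a i * skewOp k A σ b j =
      skewOp k A σ (a * (σ ^ i : A ≃ₐ[k] A) b) (i + j) := by
  apply Finsupp.lhom_ext
  intro n c
  rw [Module.End.mul_apply]
  rw [skewOp_single, skewOp_single, skewOp_single]
  rw [map_mul]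
  have h1 : (σ ^ i : A ≃ₐ[k] A) ((σ ^ j : A ≃ₐ[k] A) c) = (σ ^ (i + j) : A ≃ₐ[k] A) c := by
    rw [pow_add]
    rfl
  rw [h1]
  ring_nf

lemma skewOp_one_zero : skewOp k A σ 1 0 = 1 := by
  apply Finsupp.lhom_ext
  intro n c
  rw [skewOp_single, pow_zero, one_mul, add_zero]
  rfl

lemma skewOp_add (a b : A) (i : ℕ) :
    skewOp k A σ (a + b) i = skewOp k A σ a i + skewOp k A σ b i := by
  apply Finsupp.lhom_ext
  intro n c
  simp only [skewOp_single, add_mul, Finsupp.single_add, LinearMap.add_apply]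

lemma skewOp_smul (c : k) (a : A) (i : ℕ) :
    skewOp k A σ (c • a) i = c • skewOp k A σ a i := by
  apply Finsupp.lhom_ext
  intro n x
  simp only [skewOp_single, smul_mul_assoc, Finsupp.smul_single, LinearMap.smul_apply]

/-- `A → A[x,σ]` as an algebra hom. -/
noncomputable def skewCHom : A →ₐ[k] ↥(SkewPolyAlg k A σ) where
  toFun := skewC k A σ
  map_one' := by
    apply Subtype.ext
    show skewOp k A σ 1 0 = 1
    exact skewOp_one_zero k A σ
  map_mul' := fun a b => by
    apply Subtype.ext
    show skewOp k A σ (a * b) 0 = skewOp k A σ a 0 * skewOp k A σ b 0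
    rw [skewOp_mul]
    simp
  map_zero' := by
    apply Subtype.ext
    show skewOp k A σ 0 0 = 0
    apply Finsupp.lhom_ext
    intro n c
    simp only [skewOp_single, zero_mul, Finsupp.single_zero, LinearMap.zero_apply]
  map_add' := fun a b => by
    apply Subtype.ext
    exact skewOp_add k A σ a b 0
  commutes' := fun c => by
    apply Subtype.ext
    show skewOp k A σ (algebraMap k A c) 0 = algebraMap k (Module.End k (ℕ →₀ A)) c
    apply Finsupp.lhom_ext
    intro n x
    rw [skewOp_single, Module.algebraMap_end_apply, Finsupp.smul_single, pow_zero]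
    rw [show (1 : A ≃ₐ[k] A) x = x from rfl, add_zero, Algebra.smul_def]

lemma skewX_pow_val (i : ℕ) : ((skewX k A σ ^ i : ↥(SkewPolyAlg k A σ)) : Module.End k (ℕ →₀ A))
    = skewOp k A σ 1 i := by
  induction i with
  | zero => simpa using (skewOp_one_zero k A σ).symm
  | succ n ih =>
      rw [pow_succ, MulMemClass.coe_mul, ih]
      show skewOp k A σ 1 n * skewOp k A σ 1 1 = _
      rw [skewOp_mul]
      simp

lemma skewC_mul_skewX_pow (b : A) (i : ℕ) :
    ((skewCHom k A σ b * skewX k A σ ^ i : ↥(SkewPolyAlg k A σ)) : Module.End k (ℕ →₀ A))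
      = skewOp k A σ b i := by
  rw [MulMemClass.coe_mul, skewX_pow_val]
  show skewOp k A σ b 0 * skewOp k A σ 1 i = _
  rw [skewOp_mul]
  simp

lemma skewX_mul_skewC (b : A) :
    skewX k A σ * skewCHom k A σ b = skewCHom k A σ (σ b) * skewX k A σ := by
  apply Subtype.ext
  show skewOp k A σ 1 1 * skewOp k A σ b 0 = skewOp k A σ (σ b) 0 * skewOp k A σ 1 1
  rw [skewOp_mul, skewOp_mul]
  simp [pow_one]

end SkewLemmas

open Polynomial

section Pres

variable (k : Type u) [Field k] (g p : Polynomial k)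

noncomputable def AAe : RingQuot (presRel k g p) :=
  RingQuot.mkAlgHom k (presRel k g p) (FreeAlgebra.ι k (1 : Fin 2))

noncomputable def XXe : RingQuot (presRel k g p) :=
  RingQuot.mkAlgHom k (presRel k g p) (FreeAlgebra.ι k (0 : Fin 2))

lemma aeval_AAe_g : aeval (AAe k g p) g = 0 := by
  have h := RingQuot.mkAlgHom_rel k (presRel.gA (k := k) (g := g) (p := p))
  rw [map_zero] at h
  rw [AAe, Polynomial.aeval_algHom_apply, h]

lemma XXe_mul_AAe : XXe k g p * AAe k g p = aeval (AAe k g p) p * XXe k g p := by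
  have h := RingQuot.mkAlgHom_rel k (presRel.XA (k := k) (g := g) (p := p))
  rw [map_mul, map_mul] at h
  rw [XXe, AAe, h, Polynomial.aeval_algHom_apply]

lemma XXe_mul_AAe_pow (n : ℕ) :
    XXe k g p * (AAe k g p) ^ n = aeval (AAe k g p) (p ^ n) * XXe k g p := by
  induction n with
  | zero => simp
  | succ m ih =>
      rw [pow_succ, ← mul_assoc, ih, mul_assoc, XXe_mul_AAe, ← mul_assoc, ← map_mul, ← pow_succ]

lemma XXe_mul_aeval (q : Polynomial k) :
    XXe k g p * aeval (AAe k g p) q = aeval (AAe k g p) (q.comp p) * XXe k g p := by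
  induction q using Polynomial.induction_on' with
  | add f h hf hh =>
      rw [map_add, mul_add, hf, hh, Polynomial.add_comp, map_add, add_mul]
  | monomial n c =>
      rw [Polynomial.aeval_monomial, ← mul_assoc, ← Algebra.commutes, mul_assoc, XXe_mul_AAe_pow,
        ← mul_assoc, Polynomial.monomial_comp, map_mul, Polynomial.aeval_C]

lemma XXe_pow_mul_aeval (j : ℕ) : ∀ q : Polynomial k,
    ∃ q' : Polynomial k, XXe k g p ^ j * aeval (AAe k g p) q
      = aeval (AAe k g p) q' * XXe k g p ^ j := by
  induction j with
  | zero => intro q; exact ⟨q, by simp⟩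
  | succ m ih =>
      intro q
      obtain ⟨q', hq'⟩ := ih (q.comp p)
      refine ⟨q', ?_⟩
      rw [pow_succ, mul_assoc, XXe_mul_aeval, ← mul_assoc, hq', mul_assoc, ← pow_succ]

end Pres

section Pres2

variable (k : Type u) [Field k] (g p : Polynomial k)

noncomputable def Θ : (ℕ →₀ Polynomial k) →ₗ[k] RingQuot (presRel k g p) :=
  Finsupp.lsum k fun j => (LinearMap.mulRight k (XXe k g p ^ j)).comp
    (Polynomial.aeval (AAe k g p)).toLinearMap

lemma Θ_single (j : ℕ) (f : Polynomial k) :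
    Θ k g p (Finsupp.single j f) = aeval (AAe k g p) f * XXe k g p ^ j := by
  rw [Θ, Finsupp.lsum_single]
  rfl

lemma Θ_apply (y : ℕ →₀ Polynomial k) :
    Θ k g p y = y.sum fun j f => aeval (AAe k g p) f * XXe k g p ^ j := by
  rw [Θ, Finsupp.lsum_apply]
  rfl

def T : Set (RingQuot (presRel k g p)) :=
  {x | ∃ f : Polynomial k, ∃ j : ℕ, x = aeval (AAe k g p) f * XXe k g p ^ j}

lemma range_Θ_eq : LinearMap.range (Θ k g p) = Submodule.span k (T k g p) := by
  apply le_antisymm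
  · rintro x ⟨y, rfl⟩
    rw [Θ_apply, Finsupp.sum]
    exact Submodule.sum_mem _ fun j _ => Submodule.subset_span ⟨y j, j, rfl⟩
  · rw [Submodule.span_le]
    rintro x ⟨f, j, rfl⟩
    exact ⟨Finsupp.single j f, Θ_single k g p j f⟩

lemma mul_mem_span {x y : RingQuot (presRel k g p)}
    (hx : x ∈ Submodule.span k (T k g p)) (hy : y ∈ Submodule.span k (T k g p)) :
    x * y ∈ Submodule.span k (T k g p) := by
  induction hx, hy using Submodule.span_induction₂ with
  | mem_mem u v hu hv =>
      obtain ⟨f, j, rfl⟩ := hu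
      obtain ⟨h, l, rfl⟩ := hv
      obtain ⟨q', hq'⟩ := XXe_pow_mul_aeval k g p j h
      have key : aeval (AAe k g p) f * XXe k g p ^ j * (aeval (AAe k g p) h * XXe k g p ^ l)
          = aeval (AAe k g p) (f * q') * XXe k g p ^ (j + l) := by
        rw [mul_assoc (aeval (AAe k g p) f), ← mul_assoc (XXe k g p ^ j), hq',
          mul_assoc (aeval (AAe k g p) q'), ← pow_add, ← mul_assoc, ← map_mul]
      rw [key]
      exact Submodule.subset_span ⟨f * q', j + l, rfl⟩
  | zero_left v hv => rw [zero_mul]; exact Submodule.zero_mem _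
  | zero_right u hu => rw [mul_zero]; exact Submodule.zero_mem _
  | add_left u v w hu hv hw h1 h2 => rw [add_mul]; exact Submodule.add_mem _ h1 h2
  | add_right u v w hu hv hw h1 h2 => rw [mul_add]; exact Submodule.add_mem _ h1 h2
  | smul_left c u v hu hv h1 => rw [smul_mul_assoc]; exact Submodule.smul_mem _ _ h1
  | smul_right c u v hu hv h1 => rw [mul_smul_comm]; exact Submodule.smul_mem _ _ h1

lemma range_Θ_top (x : RingQuot (presRel k g p)) : ∃ y, Θ k g p y = x := by
  suffices h : x ∈ LinearMap.range (Θ k g p) by exact h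
  rw [range_Θ_eq]
  obtain ⟨y, rfl⟩ := RingQuot.mkAlgHom_surjective k (presRel k g p) x
  induction y using FreeAlgebra.induction with
  | grade0 c =>
      rw [AlgHom.commutes, Algebra.algebraMap_eq_smul_one]
      refine Submodule.smul_mem _ _ (Submodule.subset_span ⟨1, 0, ?_⟩)
      rw [map_one, one_mul, pow_zero]
  | grade1 v =>
      fin_cases v
      · refine Submodule.subset_span ⟨1, 1, ?_⟩
        rw [map_one, one_mul, pow_one]
        rfl
      · refine Submodule.subset_span ⟨Polynomial.X, 0, ?_⟩
        rw [Polynomial.aeval_X, pow_zero, mul_one]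
        rfl
  | mul a b ha hb => rw [map_mul]; exact mul_mem_span k g p ha hb
  | add a b ha hb => rw [map_add]; exact Submodule.add_mem _ ha hb

end Pres2

section Main

variable {k A : Type u} [Field k] [CommRing A] [Algebra k A]

lemma main_iso (σ : A ≃ₐ[k] A) (a : A) (g p : Polynomial k)
    (htop : Algebra.adjoin k {a} = ⊤) (hg : g = minpoly k a) (hp : aeval a p = σ a) :
    ∃ φ : ↥(SkewPolyAlg k A σ) ≃ₐ[k] RingQuot (presRel k g p),
      φ (skewC k A σ a) = RingQuot.mkAlgHom k (presRel k g p) (FreeAlgebra.ι k (1 : Fin 2)) ∧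
      φ (skewX k A σ) = RingQuot.mkAlgHom k (presRel k g p) (FreeAlgebra.ι k (0 : Fin 2)) := by
  classical
  let χ : FreeAlgebra k (Fin 2) →ₐ[k] ↥(SkewPolyAlg k A σ) :=
    FreeAlgebra.lift k (fun v : Fin 2 => if v = 0 then skewX k A σ else skewCHom k A σ a)
  have hχ0 : χ (FreeAlgebra.ι k (0 : Fin 2)) = skewX k A σ := by
    rw [show χ (FreeAlgebra.ι k (0 : Fin 2)) = _ from FreeAlgebra.lift_ι_apply _ _]
    simp
  have hχ1 : χ (FreeAlgebra.ι k (1 : Fin 2)) = skewCHom k A σ a := by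
    rw [show χ (FreeAlgebra.ι k (1 : Fin 2)) = _ from FreeAlgebra.lift_ι_apply _ _]
    simp
  have hrel : ∀ ⦃x y⦄, presRel k g p x y → χ x = χ y := by
    intro x y h
    cases h with
    | gA =>
        rw [map_zero, ← Polynomial.aeval_algHom_apply, hχ1,
          Polynomial.aeval_algHom_apply, hg, minpoly.aeval, map_zero]
    | XA =>
        rw [map_mul, map_mul, hχ0, hχ1, ← Polynomial.aeval_algHom_apply, hχ1,
          Polynomial.aeval_algHom_apply, hp, skewX_mul_skewC]
  let ψ : RingQuot (presRel k g p) →ₐ[k] ↥(SkewPolyAlg k A σ) :=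
    RingQuot.liftAlgHom k ⟨χ, hrel⟩
  have hψmk : ∀ w, ψ (RingQuot.mkAlgHom k (presRel k g p) w) = χ w :=
    fun w => RingQuot.liftAlgHom_mkAlgHom_apply k χ hrel w
  have hψA : ψ (AAe k g p) = skewCHom k A σ a := by rw [AAe, hψmk, hχ1]
  have hψX : ψ (XXe k g p) = skewX k A σ := by rw [XXe, hψmk, hχ0]
  have hψmono : ∀ (f : Polynomial k) (j : ℕ),
      ((ψ (aeval (AAe k g p) f * XXe k g p ^ j) : ↥(SkewPolyAlg k A σ)) :
        Module.End k (ℕ →₀ A)) = skewOp k A σ (aeval a f) j := by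
    intro f j
    rw [map_mul, map_pow, hψX, ← Polynomial.aeval_algHom_apply, hψA,
      Polynomial.aeval_algHom_apply, skewC_mul_skewX_pow]
  have hinj : Function.Injective ψ := by
    rw [injective_iff_map_eq_zero]
    intro x hx
    obtain ⟨y, rfl⟩ := range_Θ_top k g p x
    have hval : ((ψ (Θ k g p y) : ↥(SkewPolyAlg k A σ)) : Module.End k (ℕ →₀ A))
        (Finsupp.single 0 1) = y.sum fun j f => Finsupp.single j (aeval a f) := by
      rw [Θ_apply, map_finsuppSum, Finsupp.sum, Finsupp.sum,
        AddSubmonoidClass.coe_finset_sum, LinearMap.sum_apply]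
      apply Finset.sum_congr rfl
      intro j _
      rw [hψmono, skewOp_single, map_one, mul_one, zero_add]
    have hzero : ∀ j, aeval a (y j) = 0 := by
      intro j
      by_cases hjs : j ∈ y.support
      · have h2 : (((ψ (Θ k g p y) : ↥(SkewPolyAlg k A σ)) : Module.End k (ℕ →₀ A))
            (Finsupp.single 0 1)) j = 0 := by
          rw [hx]
          rfl
        rw [hval, Finsupp.sum, Finsupp.finset_sum_apply] at h2
        simp only [Finsupp.single_apply] at h2
        rw [Finset.sum_ite_eq' y.support j] at h2
        simpa [hjs] using h2
      · rw [Finsupp.notMem_support_iff.mp hjs, map_zero]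
    show Θ k g p y = 0
    rw [Θ_apply, Finsupp.sum]
    apply Finset.sum_eq_zero
    intro j _
    obtain ⟨q, hq⟩ := minpoly.dvd k a (hzero j)
    rw [← hg] at hq
    rw [hq, map_mul, aeval_AAe_g, zero_mul, zero_mul]
  have hsurj : Function.Surjective ψ := by
    intro s
    have haux : ∀ x (hx : x ∈ SkewPolyAlg k A σ), ∃ t,
        ((ψ t : ↥(SkewPolyAlg k A σ)) : Module.End k (ℕ →₀ A)) = x := by
      intro x hx
      induction hx using Algebra.adjoin_induction with
      | mem z hz =>
          obtain ⟨⟨b, i⟩, rfl⟩ := hz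
          have hb : b ∈ Algebra.adjoin k {a} := htop.symm ▸ Algebra.mem_top
          rw [Algebra.adjoin_singleton_eq_range_aeval] at hb
          obtain ⟨f, hf⟩ := hb
          have hf' : aeval a f = b := hf
          refine ⟨aeval (AAe k g p) f * XXe k g p ^ i, ?_⟩
          rw [hψmono, hf']
      | algebraMap c => exact ⟨algebraMap k _ c, by rw [AlgHom.commutes]; rfl⟩
      | add u v hu hv ihu ihv =>
          obtain ⟨t1, h1⟩ := ihu
          obtain ⟨t2, h2⟩ := ihv
          exact ⟨t1 + t2, by rw [map_add, AddMemClass.coe_add, h1, h2]⟩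
      | mul u v hu hv ihu ihv =>
          obtain ⟨t1, h1⟩ := ihu
          obtain ⟨t2, h2⟩ := ihv
          exact ⟨t1 * t2, by rw [map_mul, MulMemClass.coe_mul, h1, h2]⟩
    obtain ⟨t, ht⟩ := haux s.1 s.2
    exact ⟨t, Subtype.ext ht⟩
  refine ⟨(AlgEquiv.ofBijective ψ ⟨hinj, hsurj⟩).symm, ?_, ?_⟩
  · rw [AlgEquiv.symm_apply_eq]
    show skewC k A σ a = ψ (AAe k g p)
    rw [hψA]
    rfl
  · rw [AlgEquiv.symm_apply_eq]
    show skewX k A σ = ψ (XXe k g p)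
    rw [hψX]

end Main

theorem skewPoly_presentation (k A : Type u) [Field k] [Infinite k] [CommRing A]
    [Algebra k A] (σ : A ≃ₐ[k] A) (hGal : IsGaloisAlgebra k A σ) :
    ∃ (a : A) (g p : Polynomial k),
      Algebra.adjoin k {a} = (⊤ : Subalgebra k A) ∧
      g = minpoly k a ∧
      g.natDegree = Module.finrank k A ∧
      p.natDegree ≤ Module.finrank k A - 1 ∧
      Polynomial.aeval a p = σ a ∧
      ∃ φ : ↥(SkewPolyAlg k A σ) ≃ₐ[k] RingQuot (presRel k g p),
        φ (skewC k A σ a) = RingQuot.mkAlgHom k (presRel k g p) (FreeAlgebra.ι k (1 : Fin 2)) ∧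
        φ (skewX k A σ) = RingQuot.mkAlgHom k (presRel k g p) (FreeAlgebra.ι k (0 : Fin 2)) := by
  classical
  haveI := hGal.finiteDimensional
  haveI := hGal.formallyEtale
  haveI : Nontrivial A :=
    Module.nontrivial_of_finrank_pos (R := k) (lt_trans one_pos hGal.one_lt_finrank)
  obtain ⟨a, htop, hdeg⟩ := exists_primitive k A
  have hint : IsIntegral k a := Algebra.IsIntegral.isIntegral a
  have hmonic := minpoly.monic hint
  have hσa : σ a ∈ Algebra.adjoin k {a} := htop.symm ▸ Algebra.mem_top
  rw [Algebra.adjoin_singleton_eq_range_aeval] at hσa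
  obtain ⟨q, hq⟩ := hσa
  have hq' : aeval a q = σ a := hq
  set g := minpoly k a with hgdef
  set p := q %ₘ g with hpdef
  have hpa : aeval a p = σ a := by
    rw [hpdef, Polynomial.modByMonic_eq_sub_mul_div q g, map_sub, map_mul,
      minpoly.aeval, zero_mul, sub_zero, hq']
  have hple : p.natDegree ≤ Module.finrank k A - 1 := by
    by_cases hp0 : p = 0
    · rw [hp0]; simp
    · have hlt : p.degree < g.degree := Polynomial.degree_modByMonic_lt q hmonic
      have hnd : p.natDegree < g.natDegree := Polynomial.natDegree_lt_natDegree hp0 hlt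
      omega
  obtain ⟨φ, h1, h2⟩ := main_iso σ a g p htop hgdef hpa
  exact ⟨a, g, p, htop, hgdef, hdeg, hple, hpa, φ, h1, h2⟩
end

section
/- Let k be an infinite field with exponent of matrix multiplication ω = ω(k). For every ε > 0 there exists a constant C > 0 such that for every ⟨σ⟩-Galois algebra A over k of dimension r and every positive integer d < r, the A-bilinear rank of the scalar extension μ_d^A of μ_d satisfies rank_A(μ_d^A) ≤ C · d^{ω−1+ε} · r. -/
open scoped TensorProduct

universe u v



noncomputable def BilinearRank {R U V W : Type*} [CommSemiring R]
    [AddCommMonoid U] [Module R U] [AddCommMonoid V] [Module R V]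
    [AddCommMonoid W] [Module R W] (f : U →ₗ[R] V →ₗ[R] W) : ℕ :=
  sInf {n : ℕ | ∃ (α : Fin n → (U →ₗ[R] R)) (β : Fin n → (V →ₗ[R] R)) (w : Fin n → W),
    ∀ u v, f u v = ∑ j, α j u • β j v • w j}

noncomputable def matMulBil (R : Type*) [CommSemiring R] (e h l : ℕ) :
    Matrix (Fin e) (Fin h) R →ₗ[R] Matrix (Fin h) (Fin l) R →ₗ[R] Matrix (Fin e) (Fin l) R :=
  LinearMap.mk₂ R (fun P Q => P * Q)
    (by intros; exact Matrix.add_mul ..)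
    (by intros; exact Matrix.smul_mul ..)
    (by intros; exact Matrix.mul_add ..)
    (by intros; exact Matrix.mul_smul ..)

noncomputable def mmExponent (R : Type*) [CommSemiring R] : ℝ :=
  sInf {τ : ℝ | ∃ C : ℝ, 0 < C ∧ ∀ n : ℕ, 1 ≤ n →
    (BilinearRank (matMulBil R n n n) : ℝ) ≤ C * (n : ℝ) ^ τ}


noncomputable def skewMulBaseMap (k A : Type u) [Field k] [CommRing A] [Algebra k A]
    (σ : A ≃ₐ[k] A) (d : ℕ) :
    (Fin (d + 1) → (A ⊗[k] A)) →ₗ[A] (Fin (d + 1) → (A ⊗[k] A)) →ₗ[A]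
      (Fin (2 * d + 1) → (A ⊗[k] A)) :=
  LinearMap.mk₂ A
    (fun f g n => ∑ i : Fin (d + 1), ∑ j : Fin (d + 1),
      if (i : ℕ) + (j : ℕ) = (n : ℕ) then
        f i * (Algebra.TensorProduct.map (AlgHom.id A A) ((σ ^ (i : ℕ)).toAlgHom)) (g j)
      else 0)
    (by
      intro f f' g
      funext n
      simp only [Pi.add_apply]
      rw [← Finset.sum_add_distrib]
      refine Finset.sum_congr rfl fun i _ => ?_
      rw [← Finset.sum_add_distrib]
      refine Finset.sum_congr rfl fun j _ => ?_
      split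
      · rw [add_mul]
      · rw [add_zero])
    (by
      intro c f g
      funext n
      simp only [Pi.smul_apply]
      rw [Finset.smul_sum]
      refine Finset.sum_congr rfl fun i _ => ?_
      rw [Finset.smul_sum]
      refine Finset.sum_congr rfl fun j _ => ?_
      split
      · rw [smul_mul_assoc]
      · rw [smul_zero])
    (by
      intro f g g'
      funext n
      simp only [Pi.add_apply]
      rw [← Finset.sum_add_distrib]
      refine Finset.sum_congr rfl fun i _ => ?_
      rw [← Finset.sum_add_distrib]
      refine Finset.sum_congr rfl fun j _ => ?_
      split
      · rw [map_add, mul_add]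
      · rw [add_zero])
    (by
      intro c f g
      funext n
      simp only [Pi.smul_apply]
      rw [Finset.smul_sum]
      refine Finset.sum_congr rfl fun i _ => ?_
      rw [Finset.smul_sum]
      refine Finset.sum_congr rfl fun j _ => ?_
      split
      · rw [map_smul, mul_smul_comm]
      · rw [smul_zero])


section
variable {R U V W : Type*} [CommSemiring R]
    [AddCommMonoid U] [Module R U] [AddCommMonoid V] [Module R V]
    [AddCommMonoid W] [Module R W]

def HasDecomp (f : U →ₗ[R] V →ₗ[R] W) (n : ℕ) : Prop :=
  ∃ (α : Fin n → (U →ₗ[R] R)) (β : Fin n → (V →ₗ[R] R)) (w : Fin n → W),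
    ∀ u v, f u v = ∑ j, α j u • β j v • w j

lemma bilinearRank_le {f : U →ₗ[R] V →ₗ[R] W} {n : ℕ} (h : HasDecomp f n) :
    BilinearRank f ≤ n := Nat.sInf_le h

lemma hasDecomp_bilinearRank {f : U →ₗ[R] V →ₗ[R] W} {n : ℕ} (h : HasDecomp f n) :
    HasDecomp f (BilinearRank f) :=
  Nat.sInf_mem (s := {n : ℕ | ∃ (α : Fin n → (U →ₗ[R] R)) (β : Fin n → (V →ₗ[R] R)) (w : Fin n → W),
    ∀ u v, f u v = ∑ j, α j u • β j v • w j}) ⟨n, h⟩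

lemma hasDecomp_of_fintype {ι : Type*} [Fintype ι] (f : U →ₗ[R] V →ₗ[R] W)
    (α : ι → (U →ₗ[R] R)) (β : ι → (V →ₗ[R] R)) (w : ι → W)
    (h : ∀ u v, f u v = ∑ j, α j u • β j v • w j) : HasDecomp f (Fintype.card ι) := by
  classical
  obtain ⟨e⟩ : Nonempty (Fin (Fintype.card ι) ≃ ι) := ⟨(Fintype.equivFin ι).symm⟩
  exact ⟨α ∘ e, β ∘ e, w ∘ e, fun u v => by
    rw [h u v, ← Equiv.sum_comp e (fun j => α j u • β j v • w j)]; rfl⟩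
end

section
variable (R : Type*) [CommSemiring R] (n : ℕ)

lemma hasDecomp_matMulBil_cube : HasDecomp (matMulBil R n n n) (n * n * n) := by
  classical
  have : HasDecomp (matMulBil R n n n) (Fintype.card (Fin n × Fin n × Fin n)) := by
    apply hasDecomp_of_fintype (matMulBil R n n n)
      (fun p => Matrix.entryLinearMap R R p.1 p.2.1)
      (fun p => Matrix.entryLinearMap R R p.2.1 p.2.2)
      (fun p => Matrix.single p.1 p.2.2 1)
    intro P Q
    ext s u
    simp only [matMulBil, LinearMap.mk₂_apply, Matrix.mul_apply, Finset.sum_apply,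
      Matrix.sum_apply, Matrix.entryLinearMap_apply, Matrix.smul_apply,
      Matrix.single, Matrix.of_apply, smul_eq_mul, mul_ite, mul_one, mul_zero,
      Fintype.sum_prod_type]
    rw [Finset.sum_comm]
    refine Finset.sum_congr rfl fun t _ => ?_
    rw [Finset.sum_eq_single s (by intro b _ hb; rw [Finset.sum_eq_zero]; intro c _; simp [hb])
      (by simp)]
    rw [Finset.sum_eq_single u (by intro c _ hc; simp [hc]) (by simp)]
    simp
  simpa [Fintype.card_prod, mul_assoc] using this
end

section
variable {k A : Type*} [CommSemiring k] [CommSemiring A] [Algebra k A] {n N : ℕ}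

lemma hasDecomp_matMulBil_baseChange (h : HasDecomp (matMulBil k n n n) N) :
    HasDecomp (matMulBil A n n n) N := by
  classical
  obtain ⟨α, β, w, hw⟩ := h
  refine ⟨fun j => ∑ a : Fin n, ∑ b : Fin n,
      algebraMap k A (α j (Matrix.single a b 1)) • Matrix.entryLinearMap A A a b,
    fun j => ∑ c : Fin n, ∑ d : Fin n,
      algebraMap k A (β j (Matrix.single c d 1)) • Matrix.entryLinearMap A A c d,
    fun j => (w j).map (algebraMap k A), ?_⟩
  intro P Q
  ext s u
  have key : ∀ a b c d : Fin n,
      (∑ j : Fin N, α j (Matrix.single a b 1) *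
        (β j (Matrix.single c d 1) * w j s u)) =
      if b = c ∧ a = s ∧ d = u then 1 else 0 := by
    intro a b c d
    have h1 := congrFun (congrFun (hw (Matrix.single a b 1)
      (Matrix.single c d 1)) s) u
    simp only [matMulBil, LinearMap.mk₂_apply, Matrix.sum_apply, Matrix.smul_apply,
      smul_eq_mul] at h1
    rw [← h1, Matrix.mul_apply]
    simp [Matrix.single, Matrix.of_apply, ite_and, Finset.sum_ite_eq,
      Finset.mul_sum, Finset.sum_ite_eq']
    split_ifs <;> rfl
  simp only [matMulBil, LinearMap.mk₂_apply, Matrix.sum_apply, Matrix.smul_apply,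
    smul_eq_mul, Matrix.map_apply, LinearMap.sum_apply, LinearMap.smul_apply,
    Matrix.entryLinearMap_apply, Matrix.mul_apply]
  have expand : ∀ j : Fin N,
      (∑ a : Fin n, ∑ b : Fin n, algebraMap k A (α j (Matrix.single a b 1)) * P a b) *
      ((∑ c : Fin n, ∑ d : Fin n, algebraMap k A (β j (Matrix.single c d 1)) * Q c d) *
        algebraMap k A (w j s u)) =
      ∑ c : Fin n, ∑ d : Fin n, ∑ a : Fin n, ∑ b : Fin n,
        P a b * Q c d * algebraMap k A (α j (Matrix.single a b 1) *
          (β j (Matrix.single c d 1) * w j s u)) := by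
    intro j
    simp only [Finset.sum_mul, Finset.mul_sum, map_mul]
    refine Finset.sum_congr rfl fun c _ => Finset.sum_congr rfl fun d _ => ?_
    refine Finset.sum_congr rfl fun a _ => Finset.sum_congr rfl fun b _ => ?_
    ring
  rw [Finset.sum_congr rfl fun j _ => expand j]
  rw [Finset.sum_comm]
  have swap2 : ∀ c : Fin n, (∑ j : Fin N, ∑ d : Fin n, ∑ a : Fin n, ∑ b : Fin n,
      P a b * Q c d * algebraMap k A (α j (Matrix.single a b 1) *
        (β j (Matrix.single c d 1) * w j s u))) =
      ∑ d : Fin n, ∑ a : Fin n, ∑ b : Fin n,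
        P a b * Q c d * algebraMap k A (∑ j : Fin N, α j (Matrix.single a b 1) *
          (β j (Matrix.single c d 1) * w j s u)) := by
    intro c
    rw [Finset.sum_comm]
    refine Finset.sum_congr rfl fun d _ => ?_
    rw [Finset.sum_comm]
    refine Finset.sum_congr rfl fun a _ => ?_
    rw [Finset.sum_comm]
    refine Finset.sum_congr rfl fun b _ => ?_
    rw [map_sum, Finset.mul_sum]
  rw [Finset.sum_congr rfl fun c _ => swap2 c]
  simp only [key]
  simp [apply_ite, ite_and, Finset.sum_ite_eq, Finset.sum_ite_eq', mul_ite, mul_one, mul_zero]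
end

section
variable (R : Type*) [CommSemiring R]

lemma mmExponent_mem_aux : (3 : ℝ) ∈ {τ : ℝ | ∃ C : ℝ, 0 < C ∧ ∀ n : ℕ, 1 ≤ n →
    (BilinearRank (matMulBil R n n n) : ℝ) ≤ C * (n : ℝ) ^ τ} := by
  refine ⟨1, one_pos, fun n hn => ?_⟩
  have h1 : BilinearRank (matMulBil R n n n) ≤ n * n * n :=
    bilinearRank_le (hasDecomp_matMulBil_cube R n)
  have h2 : ((n * n * n : ℕ) : ℝ) = (n : ℝ) ^ (3 : ℝ) := by
    rw [show (3:ℝ) = ((3:ℕ):ℝ) by norm_num, Real.rpow_natCast]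
    push_cast; ring
  calc (BilinearRank (matMulBil R n n n) : ℝ) ≤ ((n * n * n : ℕ) : ℝ) := by exact_mod_cast h1
    _ = 1 * (n : ℝ) ^ (3:ℝ) := by rw [h2, one_mul]

lemma exists_mm_bound (ε : ℝ) (hε : 0 < ε) : ∃ τ C : ℝ, τ ≤ mmExponent R + ε ∧ 0 < C ∧
    ∀ n : ℕ, 1 ≤ n → (BilinearRank (matMulBil R n n n) : ℝ) ≤ C * (n : ℝ) ^ τ := by
  have hne : Set.Nonempty {τ : ℝ | ∃ C : ℝ, 0 < C ∧ ∀ n : ℕ, 1 ≤ n →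
      (BilinearRank (matMulBil R n n n) : ℝ) ≤ C * (n : ℝ) ^ τ} := ⟨3, mmExponent_mem_aux R⟩
  have hlt : mmExponent R < mmExponent R + ε := by linarith
  obtain ⟨τ, hτ, hτlt⟩ := exists_lt_of_csInf_lt hne (show sInf _ < mmExponent R + ε from hlt)
  obtain ⟨C, hC, hbound⟩ := hτ
  exact ⟨τ, C, le_of_lt hτlt, hC, hbound⟩
end

section LowerBound
variable (k : Type*) [Field k]

lemma rank_matmul_ge (n : ℕ) : n * n ≤ BilinearRank (matMulBil k n n n) := by
  classical
  obtain ⟨α, β, w, hw⟩ := hasDecomp_bilinearRank (hasDecomp_matMulBil_cube k n)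
  have hspan : ∀ X : Matrix (Fin n) (Fin n) k, X ∈ Submodule.span k (Set.range w) := by
    intro X
    have hX := hw X 1
    simp only [matMulBil, LinearMap.mk₂_apply, mul_one] at hX
    rw [hX]
    exact Submodule.sum_mem _ fun j _ =>
      Submodule.smul_mem _ _ (Submodule.smul_mem _ _ (Submodule.subset_span ⟨j, rfl⟩))
  have htop : Submodule.span k (Set.range w) = ⊤ := eq_top_iff.mpr fun X _ => hspan X
  calc n * n = Module.finrank k (Matrix (Fin n) (Fin n) k) := by
        rw [Module.finrank_matrix]; simp
    _ = Module.finrank k (Submodule.span k (Set.range w)) := by rw [htop, finrank_top]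
    _ ≤ Fintype.card (Fin (BilinearRank (matMulBil k n n n))) := finrank_range_le_card w
    _ = _ := Fintype.card_fin _

lemma mem_S_ge_two {τ C : ℝ} (hC : 0 < C)
    (hb : ∀ n : ℕ, 1 ≤ n → (BilinearRank (matMulBil k n n n) : ℝ) ≤ C * (n : ℝ) ^ τ) :
    (2 : ℝ) ≤ τ := by
  by_contra hlt
  push_neg at hlt
  set s : ℝ := 2 - τ with hs
  have hspos : 0 < s := by simp [hs]; linarith
  set n : ℕ := ⌈(C + 1) ^ (1 / s)⌉₊ + 1 with hn
  have hn1 : 1 ≤ n := by omega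
  have hnR : (C + 1) ^ (1 / s) ≤ (n : ℝ) := by
    calc (C + 1) ^ (1 / s) ≤ (⌈(C + 1) ^ (1 / s)⌉₊ : ℝ) := Nat.le_ceil _
      _ ≤ (n : ℝ) := by rw [hn]; push_cast; linarith
  have hC1 : (0 : ℝ) ≤ C + 1 := by linarith
  have hpow : C + 1 ≤ (n : ℝ) ^ s := by
    calc C + 1 = ((C + 1) ^ (1 / s)) ^ s := by
          rw [← Real.rpow_mul hC1, one_div_mul_cancel (ne_of_gt hspos), Real.rpow_one]
      _ ≤ (n : ℝ) ^ s := Real.rpow_le_rpow (Real.rpow_nonneg hC1 _) hnR (le_of_lt hspos)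
  have hnpos : (0 : ℝ) < (n : ℝ) := by positivity
  have hlow : ((n : ℝ)) ^ (2 : ℝ) ≤ C * (n : ℝ) ^ τ := by
    calc ((n : ℝ)) ^ (2 : ℝ) = ((n * n : ℕ) : ℝ) := by
          rw [show (2:ℝ) = ((2:ℕ):ℝ) by norm_num, Real.rpow_natCast]; push_cast; ring
      _ ≤ (BilinearRank (matMulBil k n n n) : ℝ) := by exact_mod_cast rank_matmul_ge k n
      _ ≤ C * (n : ℝ) ^ τ := hb n hn1
  have hτpow : (0 : ℝ) < (n : ℝ) ^ τ := Real.rpow_pos_of_pos hnpos _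
  have : C * (n : ℝ) ^ τ < (n : ℝ) ^ (2 : ℝ) := by
    calc C * (n : ℝ) ^ τ < (C + 1) * (n : ℝ) ^ τ := by nlinarith
      _ ≤ (n : ℝ) ^ s * (n : ℝ) ^ τ := mul_le_mul_of_nonneg_right hpow (le_of_lt hτpow)
      _ = (n : ℝ) ^ (2 : ℝ) := by
          rw [← Real.rpow_add hnpos]
          congr 1
          rw [hs]; ring
  linarith

lemma exists_mm_bound' (ε : ℝ) (hε : 0 < ε) : ∃ τ C : ℝ, τ ≤ mmExponent k + ε ∧ 1 ≤ τ ∧ 0 < C ∧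
    ∀ n : ℕ, 1 ≤ n → (BilinearRank (matMulBil k n n n) : ℝ) ≤ C * (n : ℝ) ^ τ := by
  obtain ⟨τ, C, h1, h2, h3⟩ := exists_mm_bound k ε hε
  exact ⟨τ, C, h1, by linarith [mem_S_ge_two k h2 h3], h2, h3⟩
end LowerBound

section Galois
variable {k A : Type u} [Field k] [CommRing A] [Algebra k A] (σ : A ≃ₐ[k] A)

/-- the `c`-th component map `A ⊗[k] A →ₐ[A] A`, `a ⊗ b ↦ a * σ^c b`. -/
noncomputable def phiMap (c : ℕ) : (A ⊗[k] A) →ₐ[A] A :=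
  Algebra.TensorProduct.lift (AlgHom.id A A) ((σ ^ c).toAlgHom) (fun _ _ => Commute.all _ _)

@[simp] lemma phiMap_tmul (c : ℕ) (a b : A) : phiMap σ c (a ⊗ₜ[k] b) = a * (σ ^ c) b := by
  simp [phiMap, Algebra.TensorProduct.lift_tmul]

lemma phiMap_congr {c c' : ℕ} (h : σ ^ c = σ ^ c') (x : A ⊗[k] A) :
    phiMap σ c x = phiMap σ c' x := by
  induction x with
  | zero => simp
  | tmul a b => rw [phiMap_tmul, phiMap_tmul, h]
  | add x y hx hy => simp only [map_add, hx, hy]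

lemma phiMap_map (c i : ℕ) (x : A ⊗[k] A) :
    phiMap σ c ((Algebra.TensorProduct.map (AlgHom.id A A) ((σ ^ i).toAlgHom)) x) =
      phiMap σ (c + i) x := by
  induction x with
  | zero => simp
  | tmul a b =>
    simp only [Algebra.TensorProduct.map_tmul, AlgHom.coe_id, id_eq, AlgEquiv.toAlgHom_eq_coe,
      AlgHom.coe_coe, phiMap_tmul, pow_add, AlgEquiv.mul_apply]
    rfl
  | add x y hx hy => simp only [map_add, hx, hy]

lemma phiMap_zero_eq_lmul (x : A ⊗[k] A) : phiMap σ 0 x = Algebra.TensorProduct.lmul' (S := A) k x := by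
  induction x with
  | zero => simp
  | tmul a b => simp [Algebra.TensorProduct.lmul'_apply_tmul]
  | add x y hx hy => simp only [map_add, hx, hy]

end Galois

section Galois2
variable {k A : Type u} [Field k] [CommRing A] [Algebra k A] (σ : A ≃ₐ[k] A)

theorem exists_splitting (hG : IsGaloisAlgebra k A σ) :
    ∃ Θ : (Fin (Module.finrank k A) → A) →ₗ[A] (A ⊗[k] A),
      ∀ x : A ⊗[k] A, Θ (fun c => phiMap σ (c : ℕ) x) = x := by
  classical
  haveI := hG.formallyEtale
  haveI := hG.finiteDimensional
  set r := Module.finrank k A with hr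
  have hr1 : 1 < r := hG.one_lt_finrank
  haveI : Nontrivial A := Module.nontrivial_of_finrank_pos (R := k) (by omega : 0 < Module.finrank k A)
  -- separability idempotent
  obtain ⟨t, ht1, ht2⟩ := (Algebra.FormallyUnramified.iff_exists_tensorProduct
    (R := k) (S := A)).mp inferInstance
  -- z * t = (lmul' z ⊗ 1) * t
  have mul_t : ∀ z : A ⊗[k] A, z * t = (Algebra.TensorProduct.lmul' (S := A) k z ⊗ₜ[k] 1) * t := by
    intro z
    induction z with
    | zero => simp
    | tmul a b =>
      have : (1 ⊗ₜ[k] b) * t = (b ⊗ₜ[k] (1:A)) * t :=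
        sub_eq_zero.mp (by rw [← sub_mul]; exact ht1 b)
      calc (a ⊗ₜ[k] b) * t = (a ⊗ₜ[k] (1:A)) * ((1 ⊗ₜ[k] b) * t) := by
            rw [← mul_assoc, Algebra.TensorProduct.tmul_mul_tmul, mul_one, one_mul]
        _ = (a ⊗ₜ[k] (1:A)) * ((b ⊗ₜ[k] (1:A)) * t) := by rw [this]
        _ = ((a * b) ⊗ₜ[k] (1:A)) * t := by
            rw [← mul_assoc, Algebra.TensorProduct.tmul_mul_tmul, mul_one]
        _ = (Algebra.TensorProduct.lmul' (S := A) k (a ⊗ₜ[k] b) ⊗ₜ[k] 1) * t := by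
            rw [Algebra.TensorProduct.lmul'_apply_tmul]
    | add x y hx hy => rw [add_mul, hx, hy, map_add, TensorProduct.add_tmul, add_mul]
  -- sigma ⊗ sigma fixes t
  have hsig : (Algebra.TensorProduct.map σ.toAlgHom σ.toAlgHom) t = t := by
    set t' := (Algebra.TensorProduct.map σ.toAlgHom σ.toAlgHom) t with ht'
    have ht'1 : ∀ s : A, ((1:A) ⊗ₜ[k] s - s ⊗ₜ[k] (1:A)) * t' = 0 := by
      intro s
      have := ht1 (σ.symm s)
      have h2 := congrArg (Algebra.TensorProduct.map σ.toAlgHom σ.toAlgHom) this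
      rw [map_mul, map_sub] at h2
      simpa using h2
    have ht'2 : Algebra.TensorProduct.lmul' (S := A) k t' = 1 := by
      have : ∀ z : A ⊗[k] A, Algebra.TensorProduct.lmul' (S := A) k
          ((Algebra.TensorProduct.map σ.toAlgHom σ.toAlgHom) z) =
          σ (Algebra.TensorProduct.lmul' (S := A) k z) := by
        intro z
        induction z with
        | zero => simp
        | tmul a b => simp [Algebra.TensorProduct.lmul'_apply_tmul]
        | add x y hx hy => simp only [map_add, hx, hy]
      rw [ht', this, ht2, map_one]
    -- uniqueness
    have e1 : t' * t = t := by
      rw [mul_t t', ht'2, ← Algebra.TensorProduct.one_def, one_mul]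
    have mul_t' : ∀ z : A ⊗[k] A, z * t' = (Algebra.TensorProduct.lmul' (S := A) k z ⊗ₜ[k] 1) * t' := by
      intro z
      induction z with
      | zero => simp
      | tmul a b =>
        have : (1 ⊗ₜ[k] b) * t' = (b ⊗ₜ[k] (1:A)) * t' :=
          sub_eq_zero.mp (by rw [← sub_mul]; exact ht'1 b)
        calc (a ⊗ₜ[k] b) * t' = (a ⊗ₜ[k] (1:A)) * ((1 ⊗ₜ[k] b) * t') := by
              rw [← mul_assoc, Algebra.TensorProduct.tmul_mul_tmul, mul_one, one_mul]
          _ = (a ⊗ₜ[k] (1:A)) * ((b ⊗ₜ[k] (1:A)) * t') := by rw [this]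
          _ = ((a * b) ⊗ₜ[k] (1:A)) * t' := by
              rw [← mul_assoc, Algebra.TensorProduct.tmul_mul_tmul, mul_one]
          _ = (Algebra.TensorProduct.lmul' (S := A) k (a ⊗ₜ[k] b) ⊗ₜ[k] 1) * t' := by
              rw [Algebra.TensorProduct.lmul'_apply_tmul]
      | add x y hx hy => rw [add_mul, hx, hy, map_add, TensorProduct.add_tmul, add_mul]
    have e2 : t * t' = t' := by
      rw [mul_t' t, ht2, ← Algebra.TensorProduct.one_def, one_mul]
    calc t' = t * t' := e2.symm
      _ = t' * t := mul_comm _ _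
      _ = t := e1
  -- t is idempotent
  have t_idem : t * t = t := by
    rw [mul_t t, ht2, ← Algebra.TensorProduct.one_def, one_mul]
  -- the idempotents u g
  have hro : orderOf σ = r := hG.orderOf_eq.trans hr.symm
  set u : ℕ → A := fun g => phiMap σ g t with hu
  have u_zero : u 0 = 1 := by
    show phiMap σ 0 t = 1
    rw [phiMap_zero_eq_lmul, ht2]
  have u_intertw : ∀ (g : ℕ) (a : A), (σ^g) a * u g = a * u g := by
    intro g a
    have h0 := congrArg (phiMap σ g) (ht1 a)
    rw [map_mul, map_sub, map_zero] at h0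
    simp only [phiMap_tmul, one_mul, map_one, mul_one] at h0
    rw [sub_mul] at h0
    exact sub_eq_zero.mp h0
  have u_fixed : ∀ g : ℕ, σ (u g) = u g := by
    intro g
    have key : ∀ z : A ⊗[k] A,
        phiMap σ g ((Algebra.TensorProduct.map σ.toAlgHom σ.toAlgHom) z) = σ (phiMap σ g z) := by
      intro z
      induction z with
      | zero => simp
      | tmul a b =>
        simp only [Algebra.TensorProduct.map_tmul, AlgEquiv.toAlgHom_eq_coe, AlgHom.coe_coe,
          phiMap_tmul, map_mul]
        congr 1
        have hcomm : σ ^ g * σ = σ * σ ^ g := ((Commute.refl σ).pow_left g)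
        calc (σ^g) (σ b) = (σ^g * σ) b := rfl
          _ = (σ * σ^g) b := by rw [hcomm]
          _ = σ ((σ^g) b) := rfl
      | add x y hx hy => simp only [map_add, hx, hy]
    have h2 := key t
    rw [hsig] at h2
    exact h2.symm
  have u_idem : ∀ g : ℕ, u g * u g = u g := by
    intro g
    show phiMap σ g t * phiMap σ g t = phiMap σ g t
    rw [← map_mul, t_idem]
  have u01 : ∀ g : ℕ, u g = 0 ∨ u g = 1 := by
    intro g
    obtain ⟨c, hc⟩ := (hG.fixed_iff (u g)).mp (u_fixed g)
    have hcc : c * c = c := by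
      have : algebraMap k A (c * c) = algebraMap k A c := by
        rw [map_mul, hc, u_idem g]
      exact (algebraMap k A).injective this
    have hcc2 : c * (c - 1) = 0 := by ring_nf; linear_combination hcc
    have : c = 0 ∨ c = 1 := by
      rcases mul_eq_zero.mp hcc2 with h | h
      · exact Or.inl h
      · exact Or.inr (by linear_combination h)
    rcases this with h | h
    · left; rw [← hc, h, map_zero]
    · right; rw [← hc, h, map_one]
  have u_of_dvd : ∀ g : ℕ, r ∣ g → u g = 1 := by
    intro g hg
    have hpow : σ ^ g = σ ^ 0 := by
      rw [pow_zero]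
      exact orderOf_dvd_iff_pow_eq_one.mp (by rw [hro]; exact hg)
    show phiMap σ g t = 1
    rw [phiMap_congr σ hpow t]
    exact u_zero
  have u_of_not_dvd : ∀ g : ℕ, ¬ (r ∣ g) → u g = 0 := by
    intro g hg
    rcases u01 g with h | h
    · exact h
    · exfalso
      apply hg
      rw [← hro]
      apply orderOf_dvd_of_pow_eq_one
      ext a
      have h3 := u_intertw g a
      rw [h, mul_one, mul_one] at h3
      simpa using h3
  -- the splitting map
  set Φl : (A ⊗[k] A) →ₗ[A] (Fin r → A) :=
    LinearMap.pi (fun c : Fin r => (phiMap σ (c:ℕ)).toLinearMap) with hΦl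
  have hsurj : Function.Surjective Φl := by
    intro w
    refine ⟨∑ c : Fin r, w c •
      (Algebra.TensorProduct.map (AlgHom.id A A) ((σ ^ ((r - (c:ℕ)) % r)).toAlgHom)) t, ?_⟩
    funext c'
    rw [hΦl]
    simp only [LinearMap.pi_apply, AlgHom.toLinearMap_apply, map_sum, map_smul]
    have hterm : ∀ c : Fin r, phiMap σ (c':ℕ)
        ((Algebra.TensorProduct.map (AlgHom.id A A) ((σ ^ ((r - (c:ℕ)) % r)).toAlgHom)) t)
        = u ((c':ℕ) + (r - (c:ℕ)) % r) := by
      intro c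
      rw [phiMap_map]
    have hval : ∀ c : Fin r, u ((c':ℕ) + (r - (c:ℕ)) % r) = if c = c' then 1 else 0 := by
      intro c
      rcases eq_or_ne c c' with h | h
      · subst h
        rw [if_pos rfl]
        apply u_of_dvd
        rcases Nat.eq_zero_or_pos (c:ℕ) with h0 | h0
        · rw [h0]; simp
        · have : (r - (c:ℕ)) % r = r - (c:ℕ) := Nat.mod_eq_of_lt (by omega)
          rw [this]
          have : (c:ℕ) + (r - (c:ℕ)) = r := by omega
          rw [this]
      · rw [if_neg h]
        apply u_of_not_dvd
        intro hdvd
        apply h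
        have hc' : (c':ℕ) < r := c'.isLt
        have hc : (c:ℕ) < r := c.isLt
        rcases Nat.eq_zero_or_pos (c:ℕ) with h0 | h0
        · rw [h0] at hdvd
          simp only [Nat.sub_zero, Nat.mod_self, Nat.add_zero] at hdvd
          have h4 : (c':ℕ) = 0 := Nat.eq_zero_of_dvd_of_lt hdvd hc'
          exact Fin.ext (by omega)
        · have hm : (r - (c:ℕ)) % r = r - (c:ℕ) := Nat.mod_eq_of_lt (by omega)
          rw [hm] at hdvd
          by_cases hlt : (c':ℕ) < (c:ℕ)
          · exfalso
            have hpos : 0 < (c':ℕ) + (r - (c:ℕ)) := by omega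
            have := Nat.le_of_dvd hpos hdvd
            omega
          · have h2 : r ∣ ((c':ℕ) + (r - (c:ℕ)) - r) := Nat.dvd_sub hdvd (dvd_refl r)
            have h3 : (c':ℕ) + (r - (c:ℕ)) - r = (c':ℕ) - (c:ℕ) := by omega
            rw [h3] at h2
            rcases Nat.eq_zero_or_pos ((c':ℕ) - (c:ℕ)) with h5 | h5
            · exact Fin.ext (by omega)
            · exfalso
              have := Nat.le_of_dvd h5 h2
              omega
    calc (∑ c : Fin r, w c * phiMap σ (c':ℕ)
          ((Algebra.TensorProduct.map (AlgHom.id A A) ((σ ^ ((r - (c:ℕ)) % r)).toAlgHom)) t))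
        = ∑ c : Fin r, w c * if c = c' then 1 else 0 := by
          refine Finset.sum_congr rfl fun c _ => ?_
          rw [hterm c, hval c]
      _ = w c' := by simp
  have hinj : Function.Injective Φl := by
    have hfr : Module.finrank k (A ⊗[k] A) = Module.finrank k (Fin r → A) := by
      rw [Module.finrank_tensorProduct, Module.finrank_pi_fintype]
      simp [← hr, Finset.sum_const]
    have h2 : Function.Injective (Φl.restrictScalars k) := by
      rw [LinearMap.injective_iff_surjective_of_finrank_eq_finrank hfr]
      exact hsurj
    exact h2
  have hbij : Function.Bijective Φl := ⟨hinj, hsurj⟩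
  refine ⟨(LinearEquiv.ofBijective Φl hbij).symm, fun x => ?_⟩
  have : (fun c : Fin r => phiMap σ (c:ℕ) x) = Φl x := rfl
  rw [this]
  exact (LinearEquiv.ofBijective Φl hbij).symm_apply_apply x
end Galois2

section Blocks
variable {k A : Type u} [Field k] [CommRing A] [Algebra k A] (σ : A ≃ₐ[k] A)

/-- block "P" matrix of a skew polynomial -/
noncomputable def PmatL (d m b : ℕ) :
    (Fin (d + 1) → (A ⊗[k] A)) →ₗ[A] Matrix (Fin (3 * m)) (Fin (3 * m)) A where
  toFun f := Matrix.of fun s t =>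
    if h : (s : ℕ) < m ∧ (s : ℕ) ≤ (t : ℕ) ∧ (t : ℕ) - (s : ℕ) ≤ d then
      phiMap σ (b * m + (s : ℕ)) (f ⟨(t : ℕ) - (s : ℕ), by omega⟩) else 0
  map_add' f f' := by
    ext s t
    simp only [Matrix.of_apply, Pi.add_apply, Matrix.add_apply]
    split
    · rw [map_add]
    · rw [add_zero]
  map_smul' a f := by
    ext s t
    simp only [Matrix.of_apply, Pi.smul_apply, Matrix.smul_apply, RingHom.id_apply]
    split
    · rw [map_smul]
    · rw [smul_zero]

noncomputable def QmatL (d m b : ℕ) :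
    (Fin (d + 1) → (A ⊗[k] A)) →ₗ[A] Matrix (Fin (3 * m)) (Fin (3 * m)) A where
  toFun g := Matrix.of fun t u =>
    if h : (t : ℕ) ≤ (u : ℕ) ∧ (u : ℕ) - (t : ℕ) ≤ d then
      phiMap σ (b * m + (t : ℕ)) (g ⟨(u : ℕ) - (t : ℕ), by omega⟩) else 0
  map_add' g g' := by
    ext t u
    simp only [Matrix.of_apply, Pi.add_apply, Matrix.add_apply]
    split
    · rw [map_add]
    · rw [add_zero]
  map_smul' a g := by
    ext t u
    simp only [Matrix.of_apply, Pi.smul_apply, Matrix.smul_apply, RingHom.id_apply]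
    split
    · rw [map_smul]
    · rw [smul_zero]

lemma sumBandAux {M : ℕ} {α : Type*} [AddCommMonoid α] (s w : ℕ) (hsw : s + w ≤ M)
    (F : Fin M → α) (h0 : ∀ t : Fin M, ((t : ℕ) < s ∨ s + w ≤ (t : ℕ)) → F t = 0) :
    ∑ t, F t = ∑ i : Fin w, F ⟨s + (i : ℕ), by omega⟩ := by
  classical
  set F' : ℕ → α := fun x => if h : x < M then F ⟨x, h⟩ else 0 with hF'
  have h1 : ∑ t : Fin M, F t = ∑ x ∈ Finset.range M, F' x := by
    rw [← Fin.sum_univ_eq_sum_range F' M]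
    refine Finset.sum_congr rfl fun t _ => ?_
    simp [hF', t.isLt]
  have h2 : ∑ i : Fin w, F ⟨s + (i : ℕ), by omega⟩ = ∑ x ∈ Finset.range w, F' (s + x) := by
    rw [← Fin.sum_univ_eq_sum_range (fun x => F' (s + x)) w]
    refine Finset.sum_congr rfl fun i _ => ?_
    have hi := i.isLt
    have : s + (i : ℕ) < M := by omega
    simp [hF', this]
  have h3 : ∑ x ∈ Finset.Ico s (s + w), F' x = ∑ x ∈ Finset.range w, F' (s + x) := by
    rw [Finset.sum_Ico_eq_sum_range]
    simp only [Nat.add_sub_cancel_left]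
  rw [h1, h2, ← h3]
  symm
  apply Finset.sum_subset
  · intro x hx
    rw [Finset.mem_Ico] at hx
    rw [Finset.mem_range]
    omega
  · intro x hx hnx
    rw [Finset.mem_range] at hx
    rw [Finset.mem_Ico] at hnx
    simp only [hF', dif_pos hx]
    exact h0 ⟨x, hx⟩ (show x < s ∨ s + w ≤ x by omega)

lemma sumIfCollapse {d n : ℕ} {α : Type*} [AddCommMonoid α] (i : Fin (d + 1)) (X : Fin (d + 1) → α) :
    (∑ j : Fin (d + 1), if (i : ℕ) + (j : ℕ) = n then X j else 0) =
      if h : (i : ℕ) ≤ n ∧ n - (i : ℕ) ≤ d then X ⟨n - (i : ℕ), by omega⟩ else 0 := by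
  split
  · next h =>
    rw [Finset.sum_eq_single (⟨n - (i : ℕ), by omega⟩ : Fin (d + 1))]
    · rw [if_pos (by simp; omega)]
    · intro j _ hj
      rw [if_neg]
      intro hc
      exact hj (by apply Fin.ext; simp; omega)
    · intro h'; exact absurd (Finset.mem_univ _) h'
  · next h =>
    apply Finset.sum_eq_zero
    intro j _
    rw [if_neg]
    intro hc
    have := j.isLt
    omega

lemma key_entry (d b : ℕ) (f g : Fin (d + 1) → (A ⊗[k] A)) (s n : ℕ)
    (hs : s < d + 1) (hn : n < 2 * d + 1) :
    (PmatL σ d (d + 1) b f * QmatL σ d (d + 1) b g)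
        ⟨s, by omega⟩ ⟨s + n, by omega⟩ =
      phiMap σ (b * (d + 1) + s) (skewMulBaseMap k A σ d f g ⟨n, by omega⟩) := by
  rw [Matrix.mul_apply]
  -- RHS expansion
  rw [show (skewMulBaseMap k A σ d f g ⟨n, by omega⟩ : A ⊗[k] A) =
    ∑ i : Fin (d + 1), ∑ j : Fin (d + 1),
      if (i : ℕ) + (j : ℕ) = n then
        f i * (Algebra.TensorProduct.map (AlgHom.id A A) ((σ ^ (i : ℕ)).toAlgHom)) (g j)
      else 0 from rfl]
  rw [map_sum]
  -- band reduction on LHS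
  rw [sumBandAux s (d + 1) (by omega) _ ?vanish]
  case vanish =>
    intro t ht
    simp only [PmatL, QmatL, LinearMap.coe_mk, AddHom.coe_mk, Matrix.of_apply]
    rw [dif_neg (by omega), zero_mul]
  refine Finset.sum_congr rfl fun i _ => ?_
  have hi := i.isLt
  simp only [PmatL, QmatL, LinearMap.coe_mk, AddHom.coe_mk, Matrix.of_apply]
  rw [dif_pos (by simp; omega)]
  simp only [Nat.add_sub_cancel_left]
  have hrhs : ∀ x : Fin (d + 1),
      phiMap σ (b * (d + 1) + s)
        (if (i : ℕ) + (x : ℕ) = n then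
          f i * (Algebra.TensorProduct.map (AlgHom.id A A) ((σ ^ (i : ℕ)).toAlgHom)) (g x)
        else 0) =
      (if (i : ℕ) + (x : ℕ) = n then
        phiMap σ (b * (d + 1) + s) (f i) * phiMap σ (b * (d + 1) + s + (i : ℕ)) (g x)
      else 0) := by
    intro x
    rw [apply_ite (phiMap σ (b * (d + 1) + s)), map_zero, map_mul, phiMap_map]
  rw [map_sum (phiMap σ (b * (d + 1) + s))]
  rw [Finset.sum_congr rfl fun x _ => hrhs x, sumIfCollapse i]
  by_cases hcase : (i : ℕ) ≤ n ∧ n - (i : ℕ) ≤ d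
  · rw [dif_pos (by omega), dif_pos hcase]
    have hidx : b * (d + 1) + (s + (i : ℕ)) = b * (d + 1) + s + (i : ℕ) := (add_assoc _ _ _).symm
    have harg : (⟨s + n - (s + (i : ℕ)), by omega⟩ : Fin (d + 1)) =
        ⟨n - (i : ℕ), by omega⟩ :=
      Fin.ext (show s + n - (s + (i : ℕ)) = n - (i : ℕ) by omega)
    rw [hidx, harg]
  · rw [dif_neg (by omega), dif_neg hcase, mul_zero]

end Blocks

section Grand
variable {k A : Type u} [Field k] [CommRing A] [Algebra k A] (σ : A ≃ₐ[k] A)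

lemma hasDecomp_skewMulBaseMap (hG : IsGaloisAlgebra k A σ) (d N : ℕ)
    (hdr : d < Module.finrank k A)
    (hN : HasDecomp (matMulBil A (3 * (d+1)) (3 * (d+1)) (3 * (d+1))) N) :
    HasDecomp (skewMulBaseMap k A σ d)
      ((Module.finrank k A + d) / (d + 1) * N) := by
  classical
  set r := Module.finrank k A with hr
  set q := (r + d) / (d + 1) with hq
  have hrq : r ≤ (d + 1) * q := by
    rw [hq]
    have h1 := Nat.div_add_mod (r + d) (d + 1)
    have h2 : (r + d) % (d + 1) < d + 1 := Nat.mod_lt _ (by omega)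
    omega
  obtain ⟨Θ, hΘ⟩ := exists_splitting σ hG
  obtain ⟨α, β, W, hW⟩ := hN
  have hcard : q * N = Fintype.card (Fin q × Fin N) := by simp
  rw [hcard]
  -- the index data
  have hmod : ∀ c : Fin r, (c : ℕ) % (d + 1) < 3 * (d + 1) := by
    intro c; have := Nat.mod_lt (c : ℕ) (show 0 < d + 1 by omega); omega
  have hmod2 : ∀ (c : Fin r) (n : Fin (2 * d + 1)),
      (c : ℕ) % (d + 1) + (n : ℕ) < 3 * (d + 1) := by
    intro c n
    have := Nat.mod_lt (c : ℕ) (show 0 < d + 1 by omega)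
    have := n.isLt
    omega
  have hdivq : ∀ c : Fin r, (c : ℕ) / (d + 1) < q := by
    intro c
    rw [Nat.div_lt_iff_lt_mul (show 0 < d + 1 by omega)]
    exact lt_of_lt_of_le c.isLt (hrq.trans_eq (mul_comm _ _))
  apply hasDecomp_of_fintype (skewMulBaseMap k A σ d)
    (fun p => (α p.2) ∘ₗ (PmatL σ d (d + 1) (p.1 : ℕ)))
    (fun p => (β p.2) ∘ₗ (QmatL σ d (d + 1) (p.1 : ℕ)))
    (fun p => fun n => Θ (fun c : Fin r =>
      if (c : ℕ) / (d + 1) = (p.1 : ℕ) then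
        W p.2 ⟨(c : ℕ) % (d + 1), hmod c⟩ ⟨(c : ℕ) % (d + 1) + (n : ℕ), hmod2 c n⟩ else 0))
  intro f g
  funext n
  -- entries of the product matrices
  have hentry : ∀ c : Fin r,
      phiMap σ (c : ℕ) (skewMulBaseMap k A σ d f g n) =
      ∑ j : Fin N, α j (PmatL σ d (d + 1) ((c : ℕ) / (d + 1)) f) *
        (β j (QmatL σ d (d + 1) ((c : ℕ) / (d + 1)) g) *
          W j ⟨(c : ℕ) % (d + 1), hmod c⟩ ⟨(c : ℕ) % (d + 1) + (n : ℕ), hmod2 c n⟩) := by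
    intro c
    have hk := key_entry σ d ((c : ℕ) / (d + 1)) f g ((c : ℕ) % (d + 1)) (n : ℕ)
      (Nat.mod_lt _ (by omega)) n.isLt
    have hc' : (c : ℕ) / (d + 1) * (d + 1) + (c : ℕ) % (d + 1) = (c : ℕ) :=
      Nat.div_add_mod' _ _
    rw [hc'] at hk
    have hn' : (⟨(n : ℕ), by omega⟩ : Fin (2 * d + 1)) = n := Fin.ext rfl
    rw [hn'] at hk
    rw [← hk]
    have hprod := hW (PmatL σ d (d + 1) ((c : ℕ) / (d + 1)) f)
      (QmatL σ d (d + 1) ((c : ℕ) / (d + 1)) g)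
    have := congrFun (congrFun (congrArg (fun (X : Matrix _ _ A) => (X : Matrix _ _ A)) hprod)
      ⟨(c : ℕ) % (d + 1), hmod c⟩) ⟨(c : ℕ) % (d + 1) + (n : ℕ), hmod2 c n⟩
    simp only [matMulBil, LinearMap.mk₂_apply, Matrix.sum_apply, Matrix.smul_apply,
      smul_eq_mul] at this
    exact this
  calc skewMulBaseMap k A σ d f g n
      = Θ (fun c : Fin r => phiMap σ (c : ℕ) (skewMulBaseMap k A σ d f g n)) :=
        (hΘ _).symm
    _ = Θ (∑ p : Fin q × Fin N,
        (α p.2 (PmatL σ d (d + 1) (p.1 : ℕ) f) * β p.2 (QmatL σ d (d + 1) (p.1 : ℕ) g)) •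
        (fun c : Fin r => if (c : ℕ) / (d + 1) = (p.1 : ℕ) then
          W p.2 ⟨(c : ℕ) % (d + 1), hmod c⟩ ⟨(c : ℕ) % (d + 1) + (n : ℕ), hmod2 c n⟩ else 0)) := by
        congr 1
        funext c
        rw [hentry c]
        rw [Finset.sum_apply]
        rw [Fintype.sum_prod_type]
        rw [Finset.sum_comm]
        refine Finset.sum_congr rfl fun j _ => ?_
        rw [Finset.sum_eq_single (⟨(c : ℕ) / (d + 1), hdivq c⟩ : Fin q)]
        · simp only [Pi.smul_apply, smul_eq_mul]
          rw [if_true]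
          ring
        · intro b _ hb
          simp only [Pi.smul_apply, smul_eq_mul]
          rw [if_neg, mul_zero]
          intro hcb
          exact hb (Fin.ext hcb.symm)
        · intro hmem; exact absurd (Finset.mem_univ _) hmem
    _ = ∑ p : Fin q × Fin N,
        (α p.2 (PmatL σ d (d + 1) (p.1 : ℕ) f) * β p.2 (QmatL σ d (d + 1) (p.1 : ℕ) g)) •
        Θ (fun c : Fin r => if (c : ℕ) / (d + 1) = (p.1 : ℕ) then
          W p.2 ⟨(c : ℕ) % (d + 1), hmod c⟩ ⟨(c : ℕ) % (d + 1) + (n : ℕ), hmod2 c n⟩ else 0) := by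
        rw [map_sum]
        refine Finset.sum_congr rfl fun p _ => ?_
        rw [map_smul]
    _ = ∑ p : Fin q × Fin N,
        ((α p.2) ∘ₗ (PmatL σ d (d + 1) (p.1 : ℕ))) f •
        ((β p.2) ∘ₗ (QmatL σ d (d + 1) (p.1 : ℕ))) g •
        (fun n' : Fin (2*d+1) => Θ (fun c : Fin r =>
          if (c : ℕ) / (d + 1) = (p.1 : ℕ) then
            W p.2 ⟨(c : ℕ) % (d + 1), hmod c⟩ ⟨(c : ℕ) % (d + 1) + (n' : ℕ), hmod2 c n'⟩ else 0)) n := by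
        refine Finset.sum_congr rfl fun p _ => ?_
        simp only [LinearMap.comp_apply, Pi.smul_apply, smul_smul]
    _ = (∑ p : Fin q × Fin N,
        ((α p.2) ∘ₗ (PmatL σ d (d + 1) (p.1 : ℕ))) f •
        ((β p.2) ∘ₗ (QmatL σ d (d + 1) (p.1 : ℕ))) g •
        (fun n' : Fin (2*d+1) => Θ (fun c : Fin r =>
          if (c : ℕ) / (d + 1) = (p.1 : ℕ) then
            W p.2 ⟨(c : ℕ) % (d + 1), hmod c⟩ ⟨(c : ℕ) % (d + 1) + (n' : ℕ), hmod2 c n'⟩ else 0))) n := by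
        rw [Finset.sum_apply]
        exact Finset.sum_congr rfl fun p _ => by simp [Pi.smul_apply]
end Grand

theorem skew_rank_base_change_upper_bound (k : Type u) [Field k] [Infinite k] :
    ∀ ε : ℝ, 0 < ε →
      ∃ C : ℝ, 0 < C ∧
        ∀ (A : Type u) [CommRing A] [Algebra k A] (σ : A ≃ₐ[k] A),
          IsGaloisAlgebra k A σ →
            ∀ d : ℕ, 0 < d → d < Module.finrank k A →
              (BilinearRank (skewMulBaseMap k A σ d) : ℝ)
                ≤ C * (d : ℝ) ^ (mmExponent k - 1 + ε) * (Module.finrank k A) := by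
  intro ε hε
  obtain ⟨τ, C, hτle, hτ1, hC, hbound⟩ := exists_mm_bound' k ε hε
  refine ⟨2 * C * (3 : ℝ) ^ τ * (2 : ℝ) ^ (τ - 1), by positivity, ?_⟩
  intro A _ _ σ hG d hd hdr
  set r := Module.finrank k A with hr
  set M := 3 * (d + 1) with hM
  set N := BilinearRank (matMulBil k M M M) with hN
  set q := (r + d) / (d + 1) with hq
  -- decomposition of the skew multiplication
  have hdecompk : HasDecomp (matMulBil k M M M) N :=
    hasDecomp_bilinearRank (hasDecomp_matMulBil_cube k M)
  have hdecompA : HasDecomp (matMulBil A M M M) N := hasDecomp_matMulBil_baseChange hdecompk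
  have hskew : HasDecomp (skewMulBaseMap k A σ d) (q * N) :=
    hasDecomp_skewMulBaseMap σ hG d N hdr hdecompA
  have hrank : BilinearRank (skewMulBaseMap k A σ d) ≤ q * N := bilinearRank_le hskew
  -- numerics
  have hd1 : (1 : ℝ) ≤ (d : ℝ) := by exact_mod_cast hd
  have hD : (0 : ℝ) < (d : ℝ) + 1 := by linarith
  have hNle : (N : ℝ) ≤ C * (3 * ((d : ℝ) + 1)) ^ τ := by
    have := hbound M (by omega)
    rw [hN]
    convert this using 3
    rw [hM]; push_cast; ring
  have hqle : (q : ℝ) ≤ 2 * (r : ℝ) / ((d : ℝ) + 1) := by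
    rw [le_div_iff₀ hD]
    have h1 : q * (d + 1) ≤ r + d := Nat.div_mul_le_self _ _
    have h2 : ((q * (d + 1) : ℕ) : ℝ) = (q : ℝ) * ((d : ℝ) + 1) := by push_cast; ring
    have h3 : ((q * (d + 1) : ℕ) : ℝ) ≤ ((r + d : ℕ) : ℝ) := by exact_mod_cast h1
    rw [h2] at h3
    have h4 : ((r + d : ℕ) : ℝ) ≤ 2 * (r : ℝ) := by
      push_cast
      have : (d : ℝ) ≤ (r : ℝ) := by exact_mod_cast le_of_lt hdr
      linarith
    linarith
  have hNnn : (0 : ℝ) ≤ (N : ℝ) := Nat.cast_nonneg _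
  have hqnn : (0 : ℝ) ≤ 2 * (r : ℝ) / ((d : ℝ) + 1) := by positivity
  calc (BilinearRank (skewMulBaseMap k A σ d) : ℝ)
      ≤ ((q * N : ℕ) : ℝ) := by exact_mod_cast hrank
    _ = (q : ℝ) * (N : ℝ) := by push_cast; ring
    _ ≤ (2 * (r : ℝ) / ((d : ℝ) + 1)) * (C * (3 * ((d : ℝ) + 1)) ^ τ) := by
        apply mul_le_mul hqle hNle hNnn hqnn
    _ = (2 * C * (3 : ℝ) ^ τ) * (((d : ℝ) + 1) ^ τ / ((d : ℝ) + 1)) * (r : ℝ) := by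
        rw [Real.mul_rpow (by norm_num) (le_of_lt hD)]
        field_simp
    _ = (2 * C * (3 : ℝ) ^ τ) * ((d : ℝ) + 1) ^ (τ - 1) * (r : ℝ) := by
        rw [Real.rpow_sub hD, Real.rpow_one]
    _ ≤ (2 * C * (3 : ℝ) ^ τ) * ((2 : ℝ) ^ (τ - 1) * (d : ℝ) ^ (τ - 1)) * (r : ℝ) := by
        have hbase : (d : ℝ) + 1 ≤ 2 * (d : ℝ) := by linarith
        have h5 : ((d : ℝ) + 1) ^ (τ - 1) ≤ (2 * (d : ℝ)) ^ (τ - 1) :=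
          Real.rpow_le_rpow (le_of_lt hD) hbase (by linarith)
        have h6 : (2 * (d : ℝ)) ^ (τ - 1) = (2 : ℝ) ^ (τ - 1) * (d : ℝ) ^ (τ - 1) :=
          Real.mul_rpow (by norm_num) (by linarith)
        have h7 : (0 : ℝ) ≤ 2 * C * (3 : ℝ) ^ τ := by positivity
        have h8 : (0 : ℝ) ≤ (r : ℝ) := Nat.cast_nonneg _
        rw [← h6]
        exact mul_le_mul_of_nonneg_right (mul_le_mul_of_nonneg_left h5 h7) h8
    _ ≤ (2 * C * (3 : ℝ) ^ τ * (2 : ℝ) ^ (τ - 1)) * (d : ℝ) ^ (mmExponent k - 1 + ε) * (r : ℝ) := by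
        have h9 : (d : ℝ) ^ (τ - 1) ≤ (d : ℝ) ^ (mmExponent k - 1 + ε) :=
          Real.rpow_le_rpow_of_exponent_le hd1 (by linarith)
        have h10 : (0 : ℝ) ≤ 2 * C * (3 : ℝ) ^ τ * (2 : ℝ) ^ (τ - 1) := by positivity
        have h11 : (0 : ℝ) ≤ (r : ℝ) := Nat.cast_nonneg _
        calc (2 * C * (3 : ℝ) ^ τ) * ((2 : ℝ) ^ (τ - 1) * (d : ℝ) ^ (τ - 1)) * (r : ℝ)
            = (2 * C * (3 : ℝ) ^ τ * (2 : ℝ) ^ (τ - 1)) * (d : ℝ) ^ (τ - 1) * (r : ℝ) := by ring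
          _ ≤ _ := mul_le_mul_of_nonneg_right (mul_le_mul_of_nonneg_left h9 h10) h11
end

section
/- Let k be a field with exponent of matrix multiplication ω = ω(k). For every ε > 0 there exists a constant C > 0 such that the following holds for all integers r ≥ 1, m ≥ 0 and all integers k_1, k_2 with 2−r ≤ k_1, k_2 ≤ r−m. For i = 1,2 let V_i be the subspace of r×r matrices P over k whose s-th diagonal (the vector of entries P_{j, j+s−1}) is zero whenever s < k_i or s > k_i + m. Then the bilinear rank over k of the matrix multiplication map restricted to V_1 × V_2 (with values in r×r matrices) is at most C · (m+1)^{ω−1+ε} · r. -/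
open scoped TensorProduct

universe u v



/-- The submodule of r×r matrices supported on diagonals k₀, …, k₀+m (1-indexed diagonal
convention: the entry P i j lies on the s-th diagonal where s = j - i + 1). -/
def bandedSubmodule (k : Type*) [Field k] (r m : ℕ) (k₀ : ℤ) :
    Submodule k (Matrix (Fin r) (Fin r) k) where
  carrier := {P | ∀ i j : Fin r,
    ((j : ℤ) - (i : ℤ) + 1 < k₀ ∨ k₀ + (m : ℤ) < (j : ℤ) - (i : ℤ) + 1) → P i j = 0}
  add_mem' := by
    intro P Q hP hQ i j hij
    simp only [Matrix.add_apply, hP i j hij, hQ i j hij, add_zero]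
  zero_mem' := by intro i j _; rfl
  smul_mem' := by
    intro c P hP i j hij
    simp only [Matrix.smul_apply, hP i j hij, smul_zero]

/-- The multiplication of banded matrices, as a bilinear map. -/
noncomputable def bandedMulMap (k : Type*) [Field k] (r m : ℕ) (k₁ k₂ : ℤ) :
    ↥(bandedSubmodule k r m k₁) →ₗ[k] ↥(bandedSubmodule k r m k₂) →ₗ[k]
      Matrix (Fin r) (Fin r) k :=
  LinearMap.mk₂ k (fun P Q => (P : Matrix (Fin r) (Fin r) k) * (Q : Matrix (Fin r) (Fin r) k))
    (by intros; simp [Matrix.add_mul])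
    (by intros; simp [Matrix.smul_mul])
    (by intros; simp [Matrix.mul_add])
    (by intros; simp [Matrix.mul_smul])

/-! ### Auxiliary lemmas on bilinear rank -/

section RankLemmas

variable {R U V W U' V' W' : Type*} [CommSemiring R]
  [AddCommMonoid U] [Module R U] [AddCommMonoid V] [Module R V]
  [AddCommMonoid W] [Module R W]
  [AddCommMonoid U'] [Module R U'] [AddCommMonoid V'] [Module R V']
  [AddCommMonoid W'] [Module R W']

def HasRankLE (f : U →ₗ[R] V →ₗ[R] W) (n : ℕ) : Prop :=
  ∃ (α : Fin n → (U →ₗ[R] R)) (β : Fin n → (V →ₗ[R] R)) (w : Fin n → W),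
    ∀ u v, f u v = ∑ j, α j u • β j v • w j

lemma BilinearRank_le {f : U →ₗ[R] V →ₗ[R] W} {n : ℕ} (h : HasRankLE f n) :
    BilinearRank f ≤ n := Nat.sInf_le h

lemma bilinearRank_hasRankLE {f : U →ₗ[R] V →ₗ[R] W} {n : ℕ} (h : HasRankLE f n) :
    HasRankLE f (BilinearRank f) := Nat.sInf_mem (⟨n, h⟩ : Set.Nonempty {n | HasRankLE f n})

/-- Master combination lemma: if `f` decomposes as a sum of `T` terms, each obtained
from a single bilinear map `f₀` of rank ≤ `N` by pre/post-composition, then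
`f` has rank ≤ `T * N`. -/
lemma hasRankLE_of_sum_comp {T N : ℕ} {f : U →ₗ[R] V →ₗ[R] W}
    {f₀ : U' →ₗ[R] V' →ₗ[R] W'}
    (A : Fin T → (U →ₗ[R] U')) (B : Fin T → (V →ₗ[R] V'))
    (L : Fin T → (W' →ₗ[R] W))
    (h₀ : HasRankLE f₀ N)
    (hf : ∀ u v, f u v = ∑ t, L t (f₀ (A t u) (B t v))) :
    HasRankLE f (T * N) := by
  obtain ⟨α, β, w, hw⟩ := h₀
  refine ⟨fun j => α (finProdFinEquiv.symm j).2 ∘ₗ A (finProdFinEquiv.symm j).1,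
    fun j => β (finProdFinEquiv.symm j).2 ∘ₗ B (finProdFinEquiv.symm j).1,
    fun j => L (finProdFinEquiv.symm j).1 (w (finProdFinEquiv.symm j).2), ?_⟩
  intro u v
  rw [hf]
  refine Eq.trans ?_ (finProdFinEquiv.sum_comp _)
  rw [Fintype.sum_prod_type]
  refine Finset.sum_congr rfl fun t _ => ?_
  rw [hw, map_sum]
  refine Finset.sum_congr rfl fun j _ => ?_
  simp [map_smul]

/-- The naive algorithm: matrix multiplication of `e × h` by `h × l` matrices has
rank at most `e * h * l`. -/
lemma hasRankLE_matMulBil_naive (e h l : ℕ) :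
    HasRankLE (matMulBil R e h l) (e * h * l) := by
  classical
  let idx : Fin (e * h * l) ≃ (Fin e × Fin h) × Fin l :=
    (finProdFinEquiv (m := e * h)).symm.trans
      (Equiv.prodCongr (finProdFinEquiv (m := e)).symm (Equiv.refl _))
  refine ⟨fun j => LinearMap.mk (M := Matrix (Fin e) (Fin h) R)
      ⟨fun P => P (idx j).1.1 (idx j).1.2, fun P Q => rfl⟩ (fun c P => rfl),
    fun j => LinearMap.mk (M := Matrix (Fin h) (Fin l) R)
      ⟨fun Q => Q (idx j).1.2 (idx j).2, fun P Q => rfl⟩ (fun c P => rfl),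
    fun j => Matrix.single (idx j).1.1 (idx j).2 1, ?_⟩
  intro P Q
  refine Eq.trans ?_ (idx.symm.sum_comp _)
  simp only [Equiv.apply_symm_apply]
  rw [Fintype.sum_prod_type, Fintype.sum_prod_type]
  ext a c
  simp only [matMulBil, LinearMap.mk₂_apply, Matrix.mul_apply, LinearMap.coe_mk,
    AddHom.coe_mk, Finset.sum_apply, Matrix.sum_apply, Matrix.smul_apply,
    Matrix.single, Matrix.of_apply, smul_ite, smul_zero, smul_eq_mul, mul_one]
  rw [Finset.sum_comm]
  refine Finset.sum_congr rfl fun j _ => ?_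
  rw [Finset.sum_eq_single a]
  · rw [Finset.sum_eq_single c] <;> simp +contextual [mul_comm]
  · intro i _ hi
    simp +contextual [hi]
  · simp

end RankLemmas

/-! ### Integer-indexed extension of matrices and the block decomposition -/

section Banded

variable {k : Type u} [Field k]

/-- Extension of a matrix to integer indices, zero outside the index range. -/
def extM {r : ℕ} (P : Matrix (Fin r) (Fin r) k) (i j : ℤ) : k :=
  if h : 0 ≤ i ∧ i < r ∧ 0 ≤ j ∧ j < r then P ⟨i.toNat, by omega⟩ ⟨j.toNat, by omega⟩ else 0

lemma extM_coe {r : ℕ} (P : Matrix (Fin r) (Fin r) k) (i j : Fin r) :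
    extM P (i : ℤ) (j : ℤ) = P i j := by
  have h : (0:ℤ) ≤ i ∧ (i:ℤ) < r ∧ (0:ℤ) ≤ j ∧ (j:ℤ) < r := by
    refine ⟨by positivity, by exact_mod_cast i.isLt, by positivity, by exact_mod_cast j.isLt⟩
  rw [extM, dif_pos h]
  congr 1 <;> exact Fin.ext (by simp)

lemma extM_add {r : ℕ} (P Q : Matrix (Fin r) (Fin r) k) (i j : ℤ) :
    extM (P + Q) i j = extM P i j + extM Q i j := by
  unfold extM; split <;> simp

lemma extM_smul {r : ℕ} (c : k) (P : Matrix (Fin r) (Fin r) k) (i j : ℤ) :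
    extM (c • P) i j = c * extM P i j := by
  unfold extM; split <;> simp

lemma extM_zero_of_not_range {r : ℕ} (P : Matrix (Fin r) (Fin r) k) {i j : ℤ}
    (h : ¬(0 ≤ i ∧ i < r ∧ 0 ≤ j ∧ j < r)) : extM P i j = 0 := dif_neg h

lemma extM_band {r m : ℕ} {k₀ : ℤ} {P : Matrix (Fin r) (Fin r) k}
    (hP : P ∈ bandedSubmodule k r m k₀) {i j : ℤ}
    (h : j - i + 1 < k₀ ∨ k₀ + m < j - i + 1) : extM P i j = 0 := by
  unfold extM
  split
  · rename_i hin
    apply hP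
    push_cast
    omega
  · rfl

/-- Extract a `B × B` submatrix at integer offsets `(a, c)`, as a linear map. -/
def shiftMap (r : ℕ) (a c : ℤ) (B : ℕ) :
    Matrix (Fin r) (Fin r) k →ₗ[k] Matrix (Fin B) (Fin B) k where
  toFun P := Matrix.of fun x y => extM P (a + x) (c + y)
  map_add' P Q := by ext x y; simp [extM_add]
  map_smul' t P := by ext x y; simp [extM_smul]

/-- Place a `B × B` matrix back into an `r × r` matrix: row block starting at `a`
(of height `b`) and column block starting at `c`. -/
def embedMap (r : ℕ) (a c : ℤ) (b B : ℕ) :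
    Matrix (Fin B) (Fin B) k →ₗ[k] Matrix (Fin r) (Fin r) k where
  toFun M := Matrix.of fun i l => ∑ x : Fin B, ∑ z : Fin B,
    (if ((i : ℤ) = a + x ∧ (x : ℕ) < b ∧ (l : ℤ) = c + z) then (1:k) else 0) * M x z
  map_add' M N := by
    ext i l
    simp only [Matrix.add_apply, Matrix.of_apply, mul_add, Finset.sum_add_distrib]
  map_smul' t M := by
    ext i l
    simp only [Matrix.smul_apply, Matrix.of_apply, smul_eq_mul, RingHom.id_apply,
      Finset.mul_sum]
    refine Finset.sum_congr rfl fun x _ => Finset.sum_congr rfl fun z _ => ?_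
    show _ * (t • M) x z = _
    simp only [Matrix.smul_apply, smul_eq_mul]
    ring

end Banded
section Core
variable {k : Type u} [Field k]

set_option maxHeartbeats 1000000 in
lemma core_identity {r m : ℕ} {k₁ k₂ : ℤ} (hr : 1 ≤ r)
    (P Q : Matrix (Fin r) (Fin r) k)
    (hP : P ∈ bandedSubmodule k r m k₁) (hQ : Q ∈ bandedSubmodule k r m k₂) :
    P * Q = ∑ t : Fin ((r-1)/(m+1)+1),
      embedMap r (((t : ℕ) * (m+1) : ℕ) : ℤ) ((((t : ℕ) * (m+1) : ℕ) : ℤ) + k₁ + k₂ - 2)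
        (m+1) (3*(m+1))
        ((shiftMap r (((t : ℕ) * (m+1) : ℕ) : ℤ) ((((t : ℕ) * (m+1) : ℕ) : ℤ) + k₁ - 1)
            (3*(m+1)) P) *
         (shiftMap r ((((t : ℕ) * (m+1) : ℕ) : ℤ) + k₁ - 1)
            ((((t : ℕ) * (m+1) : ℕ) : ℤ) + k₁ + k₂ - 2) (3*(m+1)) Q)) := by
  have hb : 0 < m + 1 := by omega
  ext i l
  rw [Matrix.mul_apply, Matrix.sum_apply]
  simp only [embedMap, shiftMap, LinearMap.coe_mk, AddHom.coe_mk, Matrix.of_apply]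
  have ht₀ : (i : ℕ) / (m+1) < (r-1)/(m+1)+1 := by
    have : (i : ℕ) / (m+1) ≤ (r-1)/(m+1) := Nat.div_le_div_right (by omega)
    omega
  set t₀ : Fin ((r-1)/(m+1)+1) := ⟨(i : ℕ) / (m+1), ht₀⟩ with ht₀def
  set w : ℕ := ((i : ℕ) / (m+1)) * (m+1) with hwdef
  have hw1 : w ≤ (i : ℕ) := Nat.div_mul_le_self _ _
  have hw2 : (i : ℕ) < w + (m+1) := by
    rw [hwdef, mul_comm]
    have h1 := Nat.div_add_mod (i : ℕ) (m+1)
    have h2 := Nat.mod_lt (i : ℕ) hb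
    omega
  have hx₀ : (i : ℕ) % (m+1) < 3*(m+1) := by
    have := Nat.mod_lt (i : ℕ) hb
    omega
  set x₀ : Fin (3*(m+1)) := ⟨(i : ℕ) % (m+1), hx₀⟩ with hx₀def
  -- collapse the t-sum
  rw [Finset.sum_eq_single t₀]; rotate_left
  · intro t _ ht
    apply Finset.sum_eq_zero; intro x _
    apply Finset.sum_eq_zero; intro z _
    rw [if_neg, zero_mul]
    rintro ⟨h1, h2, -⟩
    apply ht
    have h1' : (i : ℕ) = (t : ℕ) * (m+1) + (x : ℕ) := by exact_mod_cast h1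
    apply Fin.ext
    show (t : ℕ) = (i : ℕ) / (m+1)
    rw [h1', mul_comm, Nat.mul_add_div hb, Nat.div_eq_of_lt h2, add_zero]
  · intro h
    exact absurd (Finset.mem_univ t₀) h
  -- collapse the x-sum
  rw [Finset.sum_eq_single x₀]; rotate_left
  · intro x _ hx
    apply Finset.sum_eq_zero; intro z _
    rw [if_neg, zero_mul]
    rintro ⟨h1, h2, -⟩
    apply hx
    have h1' : (i : ℕ) = (t₀ : ℕ) * (m+1) + (x : ℕ) := by exact_mod_cast h1
    have h3 : ((t₀ : ℕ) * (m+1) + (x : ℕ)) % (m+1) = (x : ℕ) := by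
      rw [mul_comm, Nat.mul_add_mod, Nat.mod_eq_of_lt h2]
    apply Fin.ext
    show (x : ℕ) = (i : ℕ) % (m+1)
    rw [h1', h3]
  · intro h
    exact absurd (Finset.mem_univ x₀) h
  have hiw' : (i : ℕ) = w + ((i : ℕ) % (m+1)) := by
    rw [hwdef, mul_comm]
    exact (Nat.div_add_mod _ _).symm
  have hiw : (i : ℤ) = ((w : ℕ) : ℤ) + (((i : ℕ) % (m+1) : ℕ) : ℤ) := by exact_mod_cast hiw'
  have hwt : ((t₀ : ℕ) * (m+1) : ℕ) = w := rfl
  have hE1 : ((w : ℕ) : ℤ) ≤ (i : ℤ) := by exact_mod_cast hw1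
  have hE2 : (i : ℤ) < ((w : ℕ) : ℤ) + (m+1) := by exact_mod_cast hw2
  have hx₀b : (x₀ : ℕ) < m + 1 := Nat.mod_lt _ hb
  -- simplify the condition in the z-sum
  have hcond : ∀ z : Fin (3*(m+1)),
      (if ((i : ℤ) = (((t₀ : ℕ) * (m+1) : ℕ) : ℤ) + (x₀ : ℕ) ∧ (x₀ : ℕ) < m+1 ∧
          (l : ℤ) = ((((t₀ : ℕ) * (m+1) : ℕ) : ℤ) + k₁ + k₂ - 2) + (z : ℕ)) then (1:k) else 0)
      = (if ((l : ℤ) = ((((t₀ : ℕ) * (m+1) : ℕ) : ℤ) + k₁ + k₂ - 2) + (z : ℕ)) then (1:k)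
          else 0) := by
    intro z
    rw [hwt]
    simp only [hiw, hx₀b, true_and, eq_self_iff_true,
      show ((x₀:ℕ):ℤ) = (((i:ℕ) % (m+1) : ℕ):ℤ) from rfl]
  simp_rw [hcond]
  have hx₀v : (x₀ : ℕ) = (i : ℕ) % (m+1) := rfl
  by_cases hl : ((w:ℤ) + k₁ + k₂ - 2 ≤ (l:ℤ) ∧ (l:ℤ) < (w:ℤ) + k₁ + k₂ - 2 + 3*(m+1))
  · -- l is in the covered column range
    have hz₀ : ((l:ℤ) - ((w:ℤ) + k₁ + k₂ - 2)).toNat < 3*(m+1) := by omega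
    set z₀ : Fin (3*(m+1)) := ⟨((l:ℤ) - ((w:ℤ) + k₁ + k₂ - 2)).toNat, hz₀⟩ with hz₀def
    rw [Finset.sum_eq_single z₀]; rotate_left
    · intro z _ hz
      have hne : ¬((l:ℤ) = ((w:ℕ):ℤ) + k₁ + k₂ - 2 + ((z:ℕ):ℤ)) := fun h1 =>
        hz (Fin.ext (show (z:ℕ) = ((l:ℤ) - (((w:ℕ):ℤ) + k₁ + k₂ - 2)).toNat by omega))
      rw [if_neg hne, zero_mul]
    · intro h; exact absurd (Finset.mem_univ z₀) h
    rw [if_pos (show (l:ℤ) = ((w:ℕ):ℤ) + k₁ + k₂ - 2 + ((z₀:ℕ):ℤ) by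
      show (l:ℤ) = ((w:ℕ):ℤ) + k₁ + k₂ - 2 +
        ((((l:ℤ) - (((w:ℕ):ℤ) + k₁ + k₂ - 2)).toNat : ℕ) : ℤ)
      omega), one_mul]
    rw [Matrix.mul_apply]
    simp only [Matrix.of_apply]
    have hrow : ((w:ℕ):ℤ) + ((x₀:ℕ):ℤ) = ((i:ℕ):ℤ) := by omega
    have hcol : ((w:ℕ):ℤ) + k₁ + k₂ - 2 + ((z₀:ℕ):ℤ) = ((l:ℕ):ℤ) := by
      show ((w:ℕ):ℤ) + k₁ + k₂ - 2 +
        ((((l:ℤ) - (((w:ℕ):ℤ) + k₁ + k₂ - 2)).toNat : ℕ) : ℤ) = ((l:ℕ):ℤ)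
      omega
    rw [hrow, hcol]
    -- now compare the two sums via images in ℤ
    have himg1 : (∑ y : Fin (3*(m+1)),
          extM P ((i:ℕ):ℤ) (((w:ℕ):ℤ) + k₁ - 1 + ((y:ℕ):ℤ)) *
          extM Q (((w:ℕ):ℤ) + k₁ - 1 + ((y:ℕ):ℤ)) ((l:ℕ):ℤ))
        = ∑ j ∈ (Finset.range (3*(m+1))).image (fun y : ℕ => ((w:ℕ):ℤ) + k₁ - 1 + (y:ℤ)),
            extM P ((i:ℕ):ℤ) j * extM Q j ((l:ℕ):ℤ) := by
      rw [Finset.sum_image (fun a _ b _ h => by omega)]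
      exact Fin.sum_univ_eq_sum_range
        (fun y : ℕ => extM P ((i:ℕ):ℤ) (((w:ℕ):ℤ) + k₁ - 1 + (y:ℤ)) *
          extM Q (((w:ℕ):ℤ) + k₁ - 1 + (y:ℤ)) ((l:ℕ):ℤ)) (3*(m+1))
    have himg2 : (∑ j : Fin r, P i j * Q j l)
        = ∑ j ∈ (Finset.range r).image (fun y : ℕ => (y:ℤ)),
            extM P ((i:ℕ):ℤ) j * extM Q j ((l:ℕ):ℤ) := by
      rw [Finset.sum_image (fun a _ b _ h => by omega)]
      rw [← Fin.sum_univ_eq_sum_range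
        (fun y : ℕ => extM P ((i:ℕ):ℤ) (y:ℤ) * extM Q (y:ℤ) ((l:ℕ):ℤ)) r]
      exact Finset.sum_congr rfl fun j _ => by rw [extM_coe, extM_coe]
    rw [himg2, himg1]
    have hPz : ∀ j : ℤ, (j < ((w:ℕ):ℤ) + k₁ - 1 ∨ ((w:ℕ):ℤ) + k₁ - 1 + 3*(m+1) ≤ j) →
        extM P ((i:ℕ):ℤ) j = 0 := by
      intro j hj
      exact extM_band hP (by omega)
    have hout : ∀ j : ℤ, ¬(0 ≤ j ∧ j < r) → extM P ((i:ℕ):ℤ) j = 0 := by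
      intro j hj
      exact extM_zero_of_not_range _ (fun h => hj ⟨h.2.2.1, h.2.2.2⟩)
    have hzero1 : ∀ j ∈ (Finset.range r).image (fun y : ℕ => (y:ℤ)) ∪
        (Finset.range (3*(m+1))).image (fun y : ℕ => ((w:ℕ):ℤ) + k₁ - 1 + (y:ℤ)),
        j ∉ (Finset.range r).image (fun y : ℕ => (y:ℤ)) →
        extM P ((i:ℕ):ℤ) j * extM Q j ((l:ℕ):ℤ) = 0 := by
      intro j _ hnj
      simp only [Finset.mem_image, Finset.mem_range] at hnj
      push_neg at hnj
      have : ¬(0 ≤ j ∧ j < r) := fun h => hnj j.toNat (by omega) (by omega)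
      rw [hout j this, zero_mul]
    have hzero2 : ∀ j ∈ (Finset.range r).image (fun y : ℕ => (y:ℤ)) ∪
        (Finset.range (3*(m+1))).image (fun y : ℕ => ((w:ℕ):ℤ) + k₁ - 1 + (y:ℤ)),
        j ∉ (Finset.range (3*(m+1))).image (fun y : ℕ => ((w:ℕ):ℤ) + k₁ - 1 + (y:ℤ)) →
        extM P ((i:ℕ):ℤ) j * extM Q j ((l:ℕ):ℤ) = 0 := by
      intro j _ hnj
      simp only [Finset.mem_image, Finset.mem_range] at hnj
      push_neg at hnj
      have : j < ((w:ℕ):ℤ) + k₁ - 1 ∨ ((w:ℕ):ℤ) + k₁ - 1 + 3*(m+1) ≤ j := by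
        by_contra hc
        push_neg at hc
        exact hnj (j - (((w:ℕ):ℤ) + k₁ - 1)).toNat (by omega) (by omega)
      rw [hPz j this, zero_mul]
    rw [Finset.sum_subset Finset.subset_union_left hzero1,
      Finset.sum_subset Finset.subset_union_right hzero2]
  · -- l is outside the covered column range: both sides vanish
    push_neg at hl
    refine Eq.trans (Finset.sum_eq_zero ?_) (Finset.sum_eq_zero ?_).symm
    · intro j _
      by_cases h1 : ((j:ℤ) - (i:ℤ) + 1 < k₁ ∨ k₁ + (m:ℤ) < (j:ℤ) - (i:ℤ) + 1)
      · rw [hP i j h1, zero_mul]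
      · by_cases h2 : ((l:ℤ) - (j:ℤ) + 1 < k₂ ∨ k₂ + (m:ℤ) < (l:ℤ) - (j:ℤ) + 1)
        · rw [hQ j l h2, mul_zero]
        · push_neg at h1 h2
          exfalso
          omega
    · intro z _
      have hzlt : ((z:ℕ):ℤ) < 3*(m+1) := by exact_mod_cast z.isLt
      rw [if_neg (by omega), zero_mul]


end Core

theorem banded_matrix_mul_rank_upper_bound (k : Type*) [Field k] :
    ∀ ε : ℝ, 0 < ε →
      ∃ C : ℝ, 0 < C ∧
        ∀ (r : ℕ), 1 ≤ r → ∀ (m : ℕ) (k₁ k₂ : ℤ),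
          2 - (r : ℤ) ≤ k₁ → k₁ ≤ (r : ℤ) - (m : ℤ) →
          2 - (r : ℤ) ≤ k₂ → k₂ ≤ (r : ℤ) - (m : ℤ) →
            (BilinearRank (bandedMulMap k r m k₁ k₂) : ℝ)
              ≤ C * ((m : ℝ) + 1) ^ (mmExponent k - 1 + ε) * r := by
  intro ε hε
  set S : Set ℝ := {τ : ℝ | ∃ C : ℝ, 0 < C ∧ ∀ n : ℕ, 1 ≤ n →
    (BilinearRank (matMulBil k n n n) : ℝ) ≤ C * (n : ℝ) ^ τ} with hSdef
  have hS3 : (3:ℝ) ∈ S := by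
    refine ⟨1, one_pos, fun n hn => ?_⟩
    have h1 : (BilinearRank (matMulBil k n n n) : ℝ) ≤ ((n*n*n : ℕ) : ℝ) := by
      exact_mod_cast BilinearRank_le (hasRankLE_matMulBil_naive n n n)
    refine h1.trans (le_of_eq ?_)
    rw [one_mul, show (3:ℝ) = ((3:ℕ):ℝ) by norm_num, Real.rpow_natCast]
    push_cast
    ring
  obtain ⟨τ, hτS, hτlt⟩ := Real.lt_sInf_add_pos ⟨3, hS3⟩ hε
  obtain ⟨C₀, hC₀, hC₀b⟩ := hτS
  have homega : mmExponent k = sInf S := rfl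
  refine ⟨C₀ * 3 ^ (τ + 1), by positivity, ?_⟩
  intro r hr m k₁ k₂ hk1l hk1u hk2l hk2u
  have hm2r : (m:ℤ) ≤ 2*(r:ℤ) - 2 := by omega
  set T : ℕ := (r-1)/(m+1)+1 with hTdef
  set N : ℕ := BilinearRank (matMulBil k (3*(m+1)) (3*(m+1)) (3*(m+1))) with hNdef
  have hN : HasRankLE (matMulBil k (3*(m+1)) (3*(m+1)) (3*(m+1))) N :=
    bilinearRank_hasRankLE (hasRankLE_matMulBil_naive _ _ _)
  have hmain : HasRankLE (bandedMulMap k r m k₁ k₂) (T * N) := by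
    refine hasRankLE_of_sum_comp
      (fun t : Fin T => shiftMap r (((t : ℕ) * (m+1) : ℕ) : ℤ)
          ((((t : ℕ) * (m+1) : ℕ) : ℤ) + k₁ - 1) (3*(m+1)) ∘ₗ
          (bandedSubmodule k r m k₁).subtype)
      (fun t : Fin T => shiftMap r ((((t : ℕ) * (m+1) : ℕ) : ℤ) + k₁ - 1)
          ((((t : ℕ) * (m+1) : ℕ) : ℤ) + k₁ + k₂ - 2) (3*(m+1)) ∘ₗ
          (bandedSubmodule k r m k₂).subtype)
      (fun t : Fin T => embedMap r (((t : ℕ) * (m+1) : ℕ) : ℤ)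
          ((((t : ℕ) * (m+1) : ℕ) : ℤ) + k₁ + k₂ - 2) (m+1) (3*(m+1)))
      hN ?_
    intro u v
    simp only [bandedMulMap, matMulBil, LinearMap.mk₂_apply, LinearMap.comp_apply,
      Submodule.subtype_apply]
    exact core_identity hr u.1 v.1 u.2 v.2
  have hrank := BilinearRank_le hmain
  have hb0 : (0:ℝ) < (m:ℝ)+1 := by positivity
  have hb1 : (1:ℝ) ≤ (m:ℝ)+1 := by
    have : (0:ℝ) ≤ (m:ℝ) := Nat.cast_nonneg m
    linarith
  have hT : (T:ℝ) ≤ 3*(r:ℝ)/((m:ℝ)+1) := by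
    have h1 : (((r-1)/(m+1) : ℕ) : ℝ) ≤ ((r-1 : ℕ):ℝ)/(((m+1):ℕ):ℝ) := Nat.cast_div_le
    have h2 : ((r-1 : ℕ):ℝ) = (r:ℝ) - 1 := by
      rw [Nat.cast_sub hr]; norm_num
    have h3 : (T:ℝ) ≤ ((r:ℝ)-1)/((m:ℝ)+1) + 1 := by
      rw [hTdef]
      push_cast
      rw [h2] at h1
      push_cast at h1
      linarith
    refine h3.trans ?_
    rw [div_add' _ _ _ (ne_of_gt hb0), div_le_div_iff₀ hb0 hb0]
    have hm2r' : (m:ℝ) ≤ 2*(r:ℝ) - 2 := by exact_mod_cast hm2r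
    nlinarith
  have hNle : (N:ℝ) ≤ C₀ * (3*((m:ℝ)+1)) ^ τ := by
    have h2 := hC₀b (3*(m+1)) (by omega)
    push_cast at h2
    exact h2
  calc (BilinearRank (bandedMulMap k r m k₁ k₂) : ℝ)
      ≤ ((T*N : ℕ) : ℝ) := by exact_mod_cast hrank
    _ = (T:ℝ) * (N:ℝ) := by push_cast; ring
    _ ≤ (3*(r:ℝ)/((m:ℝ)+1)) * (C₀ * (3*((m:ℝ)+1)) ^ τ) :=
        mul_le_mul hT hNle (Nat.cast_nonneg N) (by positivity)
    _ = (C₀ * 3 ^ (τ+1)) * ((m:ℝ)+1) ^ (τ - 1) * r := by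
        rw [Real.mul_rpow (by norm_num) (le_of_lt hb0),
          Real.rpow_add (by norm_num : (0:ℝ) < 3), Real.rpow_one,
          Real.rpow_sub hb0, Real.rpow_one]
        field_simp
    _ ≤ (C₀ * 3 ^ (τ+1)) * ((m:ℝ)+1) ^ (mmExponent k - 1 + ε) * r := by
        have hexp : τ - 1 ≤ mmExponent k - 1 + ε := by rw [homega]; linarith
        have hpow := Real.rpow_le_rpow_of_exponent_le hb1 hexp
        have hCpos : (0:ℝ) ≤ C₀ * 3 ^ (τ+1) := by positivity
        exact mul_le_mul_of_nonneg_right (mul_le_mul_of_nonneg_left hpow hCpos)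
          (Nat.cast_nonneg r)
end

section
/- Let k be a field of characteristic r > 0 (so r is prime). Let α = diag(0, 1, …, r−1) ∈ Mat_{r×r}(k) and let β ∈ Mat_{r×r}(k) be the cyclic permutation matrix with β_{i,i+1} = 1 for 1 ≤ i ≤ r−1, β_{r,1} = 1, and all other entries 0. Let J_1 be the two-sided ideal of the free associative k-algebra k⟨X,A⟩ generated by XA − (A+1)X, and J_3 the two-sided ideal generated by X^r − 1 and A^r − A. Then the assignment A ↦ α, X ↦ β induces a well-defined k-algebra homomorphism k⟨X,A⟩/(J_1 + J_3) → Mat_{r×r}(k), and this homomorphism is a k-algebra isomorphism. -/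
universe u

/-- The diagonal matrix `diag(0, 1, …, r−1)` over `k`. -/
def natDiag (k : Type u) [Field k] (r : ℕ) : Matrix (Fin r) (Fin r) k :=
  Matrix.diagonal fun i => ((i : ℕ) : k)

/-- The cyclic permutation matrix `β` with `β_{i,i+1} = 1` (`1 ≤ i ≤ r−1`), `β_{r,1} = 1`,
and all other entries `0` (written with `0`-indexed rows and columns). -/
def cycPermMatrix (k : Type u) [Field k] (r : ℕ) : Matrix (Fin r) (Fin r) k :=
  Matrix.of fun i j => if ((i : ℕ) + 1) % r = (j : ℕ) then 1 else 0

/-- The relation on `k⟨X,A⟩` (free algebra on two generators, `X := ι 0`, `A := ι 1`)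
generating the two-sided ideal `J₁ + J₃ = (X·A − (A+1)·X) + (Xʳ − 1, Aʳ − A)`. -/
inductive artinModRel (k : Type u) [Field k] (r : ℕ) :
    FreeAlgebra k (Fin 2) → FreeAlgebra k (Fin 2) → Prop
  | comm : artinModRel k r (FreeAlgebra.ι k (0 : Fin 2) * FreeAlgebra.ι k (1 : Fin 2))
      ((FreeAlgebra.ι k (1 : Fin 2) + 1) * FreeAlgebra.ι k (0 : Fin 2))
  | xpow : artinModRel k r (FreeAlgebra.ι k (0 : Fin 2) ^ r) 1
  | apow : artinModRel k r (FreeAlgebra.ι k (1 : Fin 2) ^ r) (FreeAlgebra.ι k (1 : Fin 2))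

namespace ArtinAux

variable (k : Type u) [Field k] (r : ℕ)

lemma natCast_mod [CharP k r] (n : ℕ) : ((n % r : ℕ) : k) = (n : k) :=
  (CharP.natCast_eq_natCast_mod k r n).symm

lemma cyc_pow (hr : 0 < r) (m : ℕ) :
    cycPermMatrix k r ^ m =
      Matrix.of (fun i j : Fin r => if ((i : ℕ) + m) % r = (j : ℕ) then 1 else 0) := by
  induction m with
  | zero =>
    ext i j
    simp only [pow_zero, Matrix.of_apply, Nat.add_zero, Nat.mod_eq_of_lt i.isLt,
      Matrix.one_apply, Fin.val_inj]
  | succ m ih =>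
    rw [pow_succ, ih]
    ext i j
    rw [Matrix.mul_apply]
    set l₀ : Fin r := ⟨((i : ℕ) + m) % r, Nat.mod_lt _ hr⟩ with hl₀
    have hcond : ∀ l : Fin r, ((((i : ℕ) + m) % r = (l : ℕ)) ↔ l = l₀) := by
      intro l
      constructor
      · intro h; exact Fin.ext h.symm
      · intro h; rw [h]
    simp only [Matrix.of_apply, cycPermMatrix, hcond, ite_mul, one_mul, zero_mul,
      Finset.sum_ite_eq', Finset.mem_univ, if_true]
    have : ((l₀ : ℕ) + 1) % r = ((i : ℕ) + (m + 1)) % r := by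
      rw [hl₀]
      show (((i : ℕ) + m) % r + 1) % r = _
      rw [Nat.mod_add_mod, add_assoc]
    rw [this]

lemma cyc_pow_r (hr : 0 < r) : cycPermMatrix k r ^ r = 1 := by
  rw [cyc_pow k r hr]
  ext i j
  simp only [Matrix.of_apply, Nat.add_mod_right, Nat.mod_eq_of_lt i.isLt,
    Matrix.one_apply, Fin.val_inj]

lemma cyc_comm [CharP k r] :
    cycPermMatrix k r * natDiag k r = (natDiag k r + 1) * cycPermMatrix k r := by
  have : natDiag k r + 1 = Matrix.diagonal (fun i : Fin r => ((i : ℕ) : k) + 1) := by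
    rw [natDiag, ← Matrix.diagonal_one, Matrix.diagonal_add]
  rw [this, natDiag]
  ext i j
  rw [Matrix.mul_diagonal, Matrix.diagonal_mul]
  simp only [cycPermMatrix, Matrix.of_apply]
  by_cases h : ((i : ℕ) + 1) % r = (j : ℕ)
  · simp only [h, if_true, one_mul, mul_one]
    rw [← h, natCast_mod]
    push_cast
    ring
  · simp [h]

lemma diag_pow [CharP k r] (hr : 0 < r) : natDiag k r ^ r = natDiag k r := by
  have hp : r.Prime := (CharP.char_is_prime_or_zero k r).resolve_right (by omega)
  haveI : Fact r.Prime := ⟨hp⟩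
  rw [natDiag, Matrix.diagonal_pow]
  have : (fun i : Fin r => ((i : ℕ) : k)) ^ r = fun i : Fin r => ((i : ℕ) : k) := by
    funext i
    rw [Pi.pow_apply]
    have := map_natCast (frobenius k r) (i : ℕ)
    rwa [frobenius_def] at this
  rw [this]

end ArtinAux

open ArtinAux in
theorem artin_quotient_iso_matrix (k : Type u) [Field k] (r : ℕ) (hr : 0 < r) [CharP k r] :
    ∃ φ : RingQuot (artinModRel k r) ≃ₐ[k] Matrix (Fin r) (Fin r) k,
      φ (RingQuot.mkAlgHom k (artinModRel k r) (FreeAlgebra.ι k (1 : Fin 2))) = natDiag k r ∧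
      φ (RingQuot.mkAlgHom k (artinModRel k r) (FreeAlgebra.ι k (0 : Fin 2)))
          = cycPermMatrix k r := by
  classical
  have hp : r.Prime := (CharP.char_is_prime_or_zero k r).resolve_right (by omega)
  have h2 : 2 ≤ r := hp.two_le
  set R := RingQuot (artinModRel k r) with hR
  -- the algebra map from the free algebra to matrices
  set f : FreeAlgebra k (Fin 2) →ₐ[k] Matrix (Fin r) (Fin r) k :=
    FreeAlgebra.lift k ![cycPermMatrix k r, natDiag k r] with hf
  have hf0 : f (FreeAlgebra.ι k (0 : Fin 2)) = cycPermMatrix k r := by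
    simp [hf, FreeAlgebra.lift_ι_apply]
  have hf1 : f (FreeAlgebra.ι k (1 : Fin 2)) = natDiag k r := by
    simp [hf, FreeAlgebra.lift_ι_apply]
  have hrel : ∀ ⦃u v : FreeAlgebra k (Fin 2)⦄, artinModRel k r u v → f u = f v := by
    intro u v h
    cases h with
    | comm =>
      simp only [map_mul, map_add, map_one, hf0, hf1]
      exact cyc_comm k r
    | xpow =>
      simp only [map_pow, map_one, hf0]
      exact cyc_pow_r k r hr
    | apow =>
      simp only [map_pow, hf1]
      exact diag_pow k r hr
  set φ₀ : R →ₐ[k] Matrix (Fin r) (Fin r) k :=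
    RingQuot.liftAlgHom k ⟨f, hrel⟩ with hφ₀
  set x : R := RingQuot.mkAlgHom k (artinModRel k r) (FreeAlgebra.ι k (0 : Fin 2)) with hxdef
  set a : R := RingQuot.mkAlgHom k (artinModRel k r) (FreeAlgebra.ι k (1 : Fin 2)) with hadef
  have hφx : φ₀ x = cycPermMatrix k r := by
    rw [hxdef, hφ₀, RingQuot.liftAlgHom_mkAlgHom_apply, hf0]
  have hφa : φ₀ a = natDiag k r := by
    rw [hadef, hφ₀, RingQuot.liftAlgHom_mkAlgHom_apply, hf1]
  -- relations in R
  have hcomm : x * a = (a + 1) * x := by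
    have := RingQuot.mkAlgHom_rel k (artinModRel.comm (k := k) (r := r))
    simpa only [map_mul, map_add, map_one] using this
  have hxr : x ^ r = 1 := by
    have := RingQuot.mkAlgHom_rel k (artinModRel.xpow (k := k) (r := r))
    simpa only [map_pow, map_one] using this
  have har : a ^ r = a := by
    have := RingQuot.mkAlgHom_rel k (artinModRel.apow (k := k) (r := r))
    simpa only [map_pow] using this
  have hxaj : ∀ j : ℕ, x ^ j * a = (a + (j : R)) * x ^ j := by
    intro j
    induction j with
    | zero => simp; exact Nat.cast_zero
    | succ j ih =>
      rw [Nat.cast_succ]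
      calc x ^ (j + 1) * a = x ^ j * (x * a) := by rw [pow_succ, mul_assoc]
        _ = x ^ j * ((a + 1) * x) := by rw [hcomm]
        _ = (x ^ j * a) * x + x ^ j * x := by noncomm_ring
        _ = ((a + (j : R)) * x ^ j) * x + x ^ j * x := by rw [ih]
        _ = (a + ((j : R) + 1)) * x ^ (j + 1) := by noncomm_ring
  have hxak : ∀ j m : ℕ, x ^ j * a ^ m = (a + (j : R)) ^ m * x ^ j := by
    intro j m
    induction m with
    | zero => simp
    | succ m ih =>
      calc x ^ j * a ^ (m + 1) = (x ^ j * a ^ m) * a := by rw [pow_succ, mul_assoc]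
        _ = ((a + (j : R)) ^ m * x ^ j) * a := by rw [ih]
        _ = (a + (j : R)) ^ m * ((a + (j : R)) * x ^ j) := by rw [mul_assoc, hxaj]
        _ = (a + (j : R)) ^ (m + 1) * x ^ j := by rw [pow_succ]; noncomm_ring
  have hxmod : ∀ m : ℕ, x ^ m = x ^ (m % r) := by
    intro m
    conv_lhs => rw [← Nat.div_add_mod m r]
    rw [pow_add, pow_mul, hxr, one_pow, one_mul]
  -- span of powers of a
  set D : Submodule k R := Submodule.span k (Set.range fun s : Fin r => a ^ (s : ℕ)) with hD
  have hmemD : ∀ m : ℕ, a ^ m ∈ D := by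
    intro m
    induction m using Nat.strong_induction_on with
    | _ m ih =>
      by_cases hm : m < r
      · exact Submodule.subset_span ⟨⟨m, hm⟩, rfl⟩
      · push_neg at hm
        have hm' : a ^ m = a ^ (m - r + 1) := by
          conv_lhs => rw [← Nat.sub_add_cancel hm]
          rw [pow_add, har, ← pow_succ]
        rw [hm']
        exact ih _ (by omega)
  have hD1 : (1 : R) ∈ D := by simpa using hmemD 0
  have hDa : a ∈ D := by simpa using hmemD 1
  have hDmul : ∀ y z : R, y ∈ D → z ∈ D → y * z ∈ D := by
    have hDD : D * D ≤ D := by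
      rw [hD, Submodule.span_mul_span]
      refine Submodule.span_le.mpr ?_
      rintro _ ⟨_, ⟨s, rfl⟩, _, ⟨t, rfl⟩, rfl⟩
      dsimp only
      rw [← pow_add]
      exact hmemD _
    intro y z hy hz
    exact hDD (Submodule.mul_mem_mul hy hz)
  set D' : Subalgebra k R := D.toSubalgebra hD1 hDmul with hD'
  have hDpoly : ∀ i j m : ℕ, a ^ i * (a + (j : R)) ^ m ∈ D := by
    intro i j m
    have : a ^ i * (a + (j : R)) ^ m ∈ D' :=
      D'.mul_mem (D'.pow_mem hDa i)
        (D'.pow_mem (D'.add_mem hDa (D'.natCast_mem j)) m)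
    exact this
  -- spanning set of the whole algebra
  set g : Fin r × Fin r → R := fun p => a ^ (p.1 : ℕ) * x ^ (p.2 : ℕ) with hg
  set V : Submodule k R := Submodule.span k (Set.range g) with hV
  have hDxV : ∀ y ∈ D, ∀ m : Fin r, y * x ^ (m : ℕ) ∈ V := by
    intro y hy m
    have hle : D ≤ V.comap (LinearMap.mulRight k (x ^ (m : ℕ))) := by
      rw [hD]
      refine Submodule.span_le.mpr ?_
      rintro _ ⟨s, rfl⟩
      simp only [Set.mem_setOf_eq, SetLike.mem_coe, Submodule.mem_comap,
        LinearMap.mulRight_apply]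
      exact Submodule.subset_span ⟨(s, m), rfl⟩
    simpa using hle hy
  have hxV : ∀ y ∈ D, ∀ m : ℕ, y * x ^ m ∈ V := by
    intro y hy m
    rw [hxmod m]
    exact hDxV y hy ⟨m % r, Nat.mod_lt _ hr⟩
  have hVmul : ∀ y z : R, y ∈ V → z ∈ V → y * z ∈ V := by
    have hVV : V * V ≤ V := by
      rw [hV, Submodule.span_mul_span]
      refine Submodule.span_le.mpr ?_
      rintro _ ⟨_, ⟨⟨i, j⟩, rfl⟩, _, ⟨⟨s, t⟩, rfl⟩, rfl⟩
      have key : (a ^ (i : ℕ) * x ^ (j : ℕ)) * (a ^ (s : ℕ) * x ^ (t : ℕ))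
          = (a ^ (i : ℕ) * (a + ((j : ℕ) : R)) ^ (s : ℕ)) * x ^ ((j : ℕ) + (t : ℕ)) := by
        rw [mul_assoc, ← mul_assoc (x ^ (j : ℕ)) (a ^ (s : ℕ)) (x ^ (t : ℕ)), hxak,
          pow_add]
        noncomm_ring
      dsimp only
      rw [key]
      exact hxV _ (hDpoly _ _ _) _
    intro y z hy hz
    exact hVV (Submodule.mul_mem_mul hy hz)
  have h1V : (1 : R) ∈ V := by
    have : g (⟨0, hr⟩, ⟨0, hr⟩) = 1 := by simp [hg]
    exact this ▸ Submodule.subset_span ⟨(⟨0, hr⟩, ⟨0, hr⟩), rfl⟩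
  set V' : Subalgebra k R := V.toSubalgebra h1V hVmul with hV'
  have hxV' : x ∈ V' := by
    have : g (⟨0, hr⟩, ⟨1, h2⟩) = x := by simp [hg]
    exact this ▸ Submodule.subset_span ⟨(⟨0, hr⟩, ⟨1, h2⟩), rfl⟩
  have haV' : a ∈ V' := by
    have : g (⟨1, h2⟩, ⟨0, hr⟩) = a := by simp [hg]
    exact this ▸ Submodule.subset_span ⟨(⟨1, h2⟩, ⟨0, hr⟩), rfl⟩
  -- V is everything
  have hadj : Algebra.adjoin k
      (Set.range fun i : Fin 2 =>
        RingQuot.mkAlgHom k (artinModRel k r) (FreeAlgebra.ι k i)) = ⊤ := by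
    have h1 : (Set.range fun i : Fin 2 =>
        RingQuot.mkAlgHom k (artinModRel k r) (FreeAlgebra.ι k i))
        = RingQuot.mkAlgHom k (artinModRel k r) '' Set.range (FreeAlgebra.ι k) := by
      rw [← Set.range_comp]; rfl
    rw [h1, ← AlgHom.map_adjoin, FreeAlgebra.adjoin_range_ι, Algebra.map_top,
      AlgHom.range_eq_top]
    exact RingQuot.mkAlgHom_surjective k _
  have hVtop : V = ⊤ := by
    have hle : (⊤ : Subalgebra k R) ≤ V' := by
      rw [← hadj]
      refine Algebra.adjoin_le ?_
      rintro _ ⟨i, rfl⟩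
      fin_cases i
      · exact hxV'
      · exact haV'
    refine le_antisymm le_top ?_
    intro y _
    exact hle (Algebra.mem_top (R := k))
  have hspan : Submodule.span k (Set.range g) = ⊤ := hV ▸ hVtop
  haveI hfinR : Module.Finite k R := by
    refine ⟨⟨Finset.univ.image g, ?_⟩⟩
    rw [Finset.coe_image, Finset.coe_univ, Set.image_univ]
    exact hspan
  have hrank : Module.finrank k R ≤ r * r := by
    have h1 : Set.finrank k (↑(Finset.univ.image g) : Set R) ≤ (Finset.univ.image g).card :=
      finrank_span_finset_le_card _
    rw [Set.finrank, Finset.coe_image, Finset.coe_univ, Set.image_univ, hspan,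
      finrank_top] at h1
    refine h1.trans (Finset.card_image_le.trans ?_)
    simp [Finset.card_univ]
  -- surjectivity
  set S : Subalgebra k (Matrix (Fin r) (Fin r) k) := φ₀.range with hS
  have hβS : cycPermMatrix k r ∈ S := ⟨x, hφx⟩
  have hαS : natDiag k r ∈ S := ⟨a, hφa⟩
  set v : Fin r → k := fun i => ((i : ℕ) : k) with hv
  have hvInj : Set.InjOn v ↑(Finset.univ : Finset (Fin r)) := by
    intro i _ j _ h
    exact Fin.ext (CharP.natCast_injOn_Iio k r (Set.mem_Iio.mpr i.isLt)
      (Set.mem_Iio.mpr j.isLt) h)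
  have hdiagaeval : ∀ p : Polynomial k,
      Polynomial.aeval (natDiag k r) p = Matrix.diagonal (fun j => p.eval (v j)) := by
    intro p
    have h1 : natDiag k r = Matrix.diagonalAlgHom k v := rfl
    have h2 : (Polynomial.aeval v) p = fun j => p.eval (v j) := by
      funext j
      rw [Polynomial.aeval_fn_apply]
      exact congrFun (Polynomial.coe_aeval_eq_eval (v j)) p
    rw [h1, Polynomial.aeval_algHom_apply, h2, Matrix.diagonalAlgHom_apply]
  have hEii : ∀ i : Fin r,
      Matrix.diagonal (fun j => if j = i then (1 : k) else 0) ∈ S := by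
    intro i
    have hle : Algebra.adjoin k {natDiag k r} ≤ S :=
      Algebra.adjoin_le (by simpa [Set.singleton_subset_iff] using hαS)
    have hmem := hle (Polynomial.aeval_mem_adjoin_singleton k (natDiag k r)
      (p := Lagrange.basis Finset.univ v i))
    rw [hdiagaeval] at hmem
    have heq : (fun j => (Lagrange.basis Finset.univ v i).eval (v j))
        = fun j => if j = i then (1 : k) else 0 := by
      funext j
      rcases eq_or_ne j i with rfl | hne
      · rw [Lagrange.eval_basis_self hvInj (Finset.mem_univ j), if_pos rfl]
      · rw [Lagrange.eval_basis_of_ne hne.symm (Finset.mem_univ j), if_neg hne]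
    rwa [heq] at hmem
  have hE1 : ∀ i j : Fin r, Matrix.single i j (1 : k) ∈ S := by
    intro i j
    set m : ℕ := (j : ℕ) + r - (i : ℕ) with hm
    have hmem : Matrix.diagonal (fun l => if l = i then (1 : k) else 0)
        * cycPermMatrix k r ^ m ∈ S :=
      S.mul_mem (hEii i) (S.pow_mem hβS m)
    have heq : Matrix.diagonal (fun l => if l = i then (1 : k) else 0)
        * cycPermMatrix k r ^ m = Matrix.single i j 1 := by
      rw [cyc_pow k r hr]
      ext p q
      rw [Matrix.diagonal_mul]
      simp only [Matrix.of_apply, Matrix.single, ite_mul, one_mul, zero_mul]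
      rcases eq_or_ne p i with rfl | hne
      · have hmod : ((p : ℕ) + m) % r = (j : ℕ) := by
          have h' : (p : ℕ) + m = (j : ℕ) + r := by
            have := p.isLt; omega
          rw [h', Nat.add_mod_right, Nat.mod_eq_of_lt j.isLt]
        simp [hmod, Fin.val_inj, eq_comm]
      · simp [hne, Ne.symm hne]
    rw [heq] at hmem
    exact hmem
  have hSurj : Function.Surjective φ₀ := by
    rw [← AlgHom.range_eq_top, ← hS, eq_top_iff]
    intro M _
    rw [Matrix.matrix_eq_sum_single M]
    refine Subalgebra.sum_mem _ fun i _ => Subalgebra.sum_mem _ fun j _ => ?_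
    have : Matrix.single i j (M i j) = M i j • Matrix.single i j (1 : k) := by
      rw [Matrix.smul_single, smul_eq_mul, mul_one]
    rw [this]
    exact Subalgebra.smul_mem _ (hE1 i j) _
  have hInj : Function.Injective φ₀ := by
    have hker : LinearMap.ker φ₀.toLinearMap = ⊥ := by
      have h1 := LinearMap.finrank_range_add_finrank_ker φ₀.toLinearMap
      have h2 : LinearMap.range φ₀.toLinearMap = ⊤ := LinearMap.range_eq_top.mpr hSurj
      rw [h2, finrank_top] at h1
      have h3 : Module.finrank k (Matrix (Fin r) (Fin r) k) = r * r := by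
        rw [Module.finrank_matrix]
        simp [Fintype.card_fin]
      have h4 : Module.finrank k (LinearMap.ker φ₀.toLinearMap) = 0 := by omega
      exact Submodule.finrank_eq_zero.mp h4
    intro y z h
    rw [← sub_eq_zero]
    have hmem : y - z ∈ LinearMap.ker φ₀.toLinearMap := by
      simp [LinearMap.mem_ker, map_sub, h, sub_eq_zero]
    rw [hker] at hmem
    simpa using hmem
  refine ⟨AlgEquiv.ofBijective φ₀ ⟨hInj, hSurj⟩, ?_, ?_⟩
  · exact hφa
  · exact hφx
end

section
/- Let k be a field and R a nonzero commutative k-algebra. Then ω(R) = ω(k), where for a commutative ring S, ω(S) is the infimum of the real numbers τ for which there is a constant C > 0 such that rank_S(⟨n,n,n⟩_S) ≤ C·n^τ for all n ≥ 1, with ⟨n,n,n⟩_S the S-bilinear map of multiplying two n×n matrices over S. -/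
open scoped TensorProduct

universe u v



namespace MMAux

open Matrix

section Decomp

variable {R : Type*} [CommSemiring R] {U V W : Type*}
  [AddCommMonoid U] [Module R U] [AddCommMonoid V] [Module R V]
  [AddCommMonoid W] [Module R W]

/-- A decomposition of a bilinear map indexed by an arbitrary finite type. -/
def IsDecomp {ι : Type*} [Fintype ι] (f : U →ₗ[R] V →ₗ[R] W)
    (α : ι → (U →ₗ[R] R)) (β : ι → (V →ₗ[R] R)) (w : ι → W) : Prop :=
  ∀ u v, f u v = ∑ j, α j u • β j v • w j

lemma mem_of_isDecomp {ι : Type*} [Fintype ι] {f : U →ₗ[R] V →ₗ[R] W}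
    {α : ι → (U →ₗ[R] R)} {β : ι → (V →ₗ[R] R)} {w : ι → W} (h : IsDecomp f α β w) :
    Fintype.card ι ∈ {n : ℕ | ∃ (α : Fin n → (U →ₗ[R] R)) (β : Fin n → (V →ₗ[R] R))
      (w : Fin n → W), ∀ u v, f u v = ∑ j, α j u • β j v • w j} := by
  refine ⟨fun i => α ((Fintype.equivFin ι).symm i), fun i => β ((Fintype.equivFin ι).symm i),
    fun i => w ((Fintype.equivFin ι).symm i), fun u v => ?_⟩
  rw [h u v]
  exact (Equiv.sum_comp (Fintype.equivFin ι).symm _).symm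

lemma bilinearRank_le_of_isDecomp {ι : Type*} [Fintype ι] {f : U →ₗ[R] V →ₗ[R] W}
    {α : ι → (U →ₗ[R] R)} {β : ι → (V →ₗ[R] R)} {w : ι → W} (h : IsDecomp f α β w) :
    BilinearRank f ≤ Fintype.card ι :=
  Nat.sInf_le (mem_of_isDecomp h)

/-- The rank-one bilinear map `(u, v) ↦ a u • b v • x`. -/
def termBil (a : U →ₗ[R] R) (b : V →ₗ[R] R) (x : W) : U →ₗ[R] V →ₗ[R] W :=
  LinearMap.mk₂ R (fun u v => a u • b v • x)
    (fun u u' v => by simp [add_smul])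
    (fun c u v => by
      simp only [LinearMap.map_smul, smul_eq_mul, mul_smul])
    (fun u v v' => by simp [add_smul, smul_add])
    (fun c u v => by
      simp only [LinearMap.map_smul, smul_eq_mul, mul_smul]
      rw [smul_comm])

lemma isDecomp_iff_eq_sum {ι : Type*} [Fintype ι] (f : U →ₗ[R] V →ₗ[R] W)
    (α : ι → (U →ₗ[R] R)) (β : ι → (V →ₗ[R] R)) (w : ι → W) :
    IsDecomp f α β w ↔ f = ∑ j, termBil (α j) (β j) (w j) := by
  constructor
  · intro h
    ext u v
    simpa [termBil] using h u v
  · intro h u v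
    rw [h]
    simp [termBil]

lemma isDecomp_of_basis {ι ιU ιV : Type*} [Fintype ι] {f : U →ₗ[R] V →ₗ[R] W}
    (bU : Module.Basis ιU R U) (bV : Module.Basis ιV R V) {α : ι → (U →ₗ[R] R)} {β : ι → (V →ₗ[R] R)}
    {w : ι → W}
    (h : ∀ i j, f (bU i) (bV j) = ∑ c, α c (bU i) • β c (bV j) • w c) :
    IsDecomp f α β w := by
  rw [isDecomp_iff_eq_sum]
  refine bU.ext fun i => bV.ext fun j => ?_
  simpa [termBil] using h i j

end Decomp

section MatMul

variable {R : Type*} [CommSemiring R]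

/-- Matrix multiplication as a bilinear map, for a general finite index type. -/
noncomputable def matMulBilG (R : Type*) [CommSemiring R] (ι : Type*) [Fintype ι] :
    Matrix ι ι R →ₗ[R] Matrix ι ι R →ₗ[R] Matrix ι ι R :=
  LinearMap.mk₂ R (fun P Q => P * Q)
    (by intros; exact Matrix.add_mul ..)
    (by intros; exact Matrix.smul_mul ..)
    (by intros; exact Matrix.mul_add ..)
    (by intros; exact Matrix.mul_smul ..)

lemma matMulBil_eq_G (n : ℕ) : matMulBil R n n n = matMulBilG R (Fin n) := rfl

@[simp] lemma matMulBilG_apply {ι : Type*} [Fintype ι] (P Q : Matrix ι ι R) :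
    matMulBilG R ι P Q = P * Q := rfl

/-- The entry functional on matrices. -/
def entryLM (R : Type*) [CommSemiring R] {ι κ : Type*} (i : ι) (j : κ) :
    Matrix ι κ R →ₗ[R] R where
  toFun u := u i j
  map_add' _ _ := rfl
  map_smul' _ _ := rfl

@[simp] lemma entryLM_apply {ι κ : Type*} (i : ι) (j : κ) (u : Matrix ι κ R) :
    entryLM R i j u = u i j := rfl

lemma stdBasisMatrix_mul_entry {ι : Type*} [Fintype ι] [DecidableEq ι] (a b c d e f : ι) :
    (single a b (1 : R) * single c d (1 : R)) e f
      = if b = c ∧ a = e ∧ d = f then 1 else 0 := by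
  simp only [Matrix.mul_apply, Matrix.single, Matrix.of_apply, ite_and, boole_mul,
    mul_ite, mul_one, mul_zero, ite_mul, zero_mul]
  by_cases hae : a = e <;> by_cases hbc : b = c <;> by_cases hdf : d = f <;>
    simp [hae, hbc, hdf, Finset.sum_ite_eq, Finset.sum_ite_eq']

lemma isDecomp_cube (R : Type*) [CommSemiring R] (ι : Type*) [Fintype ι] [DecidableEq ι] :
    IsDecomp (matMulBilG R ι)
      (fun c : ι × ι × ι => entryLM R c.1 c.2.1)
      (fun c : ι × ι × ι => entryLM R c.2.1 c.2.2)
      (fun c : ι × ι × ι => single c.1 c.2.2 1) := by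
  intro u v
  ext a b
  simp only [matMulBilG_apply, Matrix.mul_apply, Matrix.sum_apply, Matrix.smul_apply,
    entryLM_apply, Matrix.single, Matrix.of_apply, smul_eq_mul, ite_and, mul_ite,
    mul_one, mul_zero, Fintype.sum_prod_type]
  rw [Finset.sum_comm]
  simp [Finset.sum_ite_eq, Finset.sum_ite_eq']

lemma mmrank_le_cube (R : Type*) [CommSemiring R] (n : ℕ) :
    BilinearRank (matMulBil R n n n) ≤ n ^ 3 := by
  have h := bilinearRank_le_of_isDecomp (isDecomp_cube R (Fin n))
  rw [matMulBil_eq_G]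
  refine h.trans ?_
  simp [pow_succ]
  ring_nf
  omega

lemma exists_isDecomp_matMul (R : Type*) [CommSemiring R] (n : ℕ) :
    ∃ (α : Fin (BilinearRank (matMulBil R n n n)) →
        (Matrix (Fin n) (Fin n) R →ₗ[R] R))
      (β : Fin (BilinearRank (matMulBil R n n n)) →
        (Matrix (Fin n) (Fin n) R →ₗ[R] R))
      (w : Fin (BilinearRank (matMulBil R n n n)) → Matrix (Fin n) (Fin n) R),
      IsDecomp (matMulBil R n n n) α β w := by
  have hne : {m : ℕ | ∃ (α : Fin m → (Matrix (Fin n) (Fin n) R →ₗ[R] R))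
      (β : Fin m → (Matrix (Fin n) (Fin n) R →ₗ[R] R))
      (w : Fin m → Matrix (Fin n) (Fin n) R),
      ∀ u v, matMulBil R n n n u v = ∑ j, α j u • β j v • w j}.Nonempty := by
    refine ⟨Fintype.card (Fin n × Fin n × Fin n), ?_⟩
    rw [matMulBil_eq_G]
    exact mem_of_isDecomp (isDecomp_cube R (Fin n))
  obtain ⟨α, β, w, h⟩ := Nat.sInf_mem hne
  exact ⟨α, β, w, h⟩

lemma one_le_mmrank (R : Type*) [CommSemiring R] [Nontrivial R] {n : ℕ} (hn : 1 ≤ n) :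
    1 ≤ BilinearRank (matMulBil R n n n) := by
  rcases Nat.eq_zero_or_pos (BilinearRank (matMulBil R n n n)) with hr | hr
  · exfalso
    obtain ⟨α, β, w, hdec⟩ := exists_isDecomp_matMul R n
    haveI : IsEmpty (Fin (BilinearRank (matMulBil R n n n))) := by rw [hr]; infer_instance
    have h11 := hdec 1 1
    simp only [Finset.univ_eq_empty, Finset.sum_empty] at h11
    have h2 := congrFun (congrFun h11 ⟨0, hn⟩) ⟨0, hn⟩
    rw [matMulBil_eq_G] at h2
    simp [Matrix.mul_apply, Matrix.one_apply] at h2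
  · exact hr

end MatMul

section Hom

lemma map_stdBasisMatrix' {S T : Type*} [CommSemiring S] [CommSemiring T] (φ : S →+* T)
    {ι κ : Type*} [DecidableEq ι] [DecidableEq κ] (i : ι) (j : κ) :
    (Matrix.single i j (1 : S)).map φ = Matrix.single i j (1 : T) := by
  ext e f
  simp [Matrix.map_apply, Matrix.single, apply_ite φ]

lemma mmrank_le_of_ringHom {S T : Type*} [CommSemiring S] [CommSemiring T]
    (φ : S →+* T) (n : ℕ) :
    BilinearRank (matMulBil T n n n) ≤ BilinearRank (matMulBil S n n n) := by
  obtain ⟨α, β, w, hdec⟩ := exists_isDecomp_matMul S n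
  have hd : IsDecomp (matMulBil T n n n)
      (fun j => (Matrix.stdBasis T (Fin n) (Fin n)).constr T
          fun p => φ (α j (Matrix.single p.1 p.2 1)))
      (fun j => (Matrix.stdBasis T (Fin n) (Fin n)).constr T
          fun p => φ (β j (Matrix.single p.1 p.2 1)))
      (fun j => (w j).map φ) := by
    apply isDecomp_of_basis (Matrix.stdBasis T (Fin n) (Fin n))
      (Matrix.stdBasis T (Fin n) (Fin n))
    rintro ⟨a, b⟩ ⟨c, d⟩
    simp only [Module.Basis.constr_basis]
    rw [Matrix.stdBasis_eq_single, Matrix.stdBasis_eq_single,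
      matMulBil_eq_G, matMulBilG_apply]
    have hb : (Matrix.single a b 1 : Matrix (Fin n) (Fin n) S) *
        Matrix.single c d 1
        = ∑ j, α j (Matrix.single a b 1) • β j (Matrix.single c d 1) • w j :=
      hdec (Matrix.single a b 1) (Matrix.single c d 1)
    ext e f
    have he := congrFun (congrFun hb e) f
    simp only [Matrix.sum_apply, Matrix.smul_apply, smul_eq_mul] at he ⊢
    have hmap : (Matrix.single a b (1:T) * Matrix.single c d 1 :
          Matrix (Fin n) (Fin n) T) e f
        = φ ((Matrix.single a b (1:S) * Matrix.single c d 1 :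
          Matrix (Fin n) (Fin n) S) e f) := by
      rw [stdBasisMatrix_mul_entry, stdBasisMatrix_mul_entry, apply_ite φ, _root_.map_one, _root_.map_zero]
    rw [hmap, he, map_sum]
    simp [Matrix.map_apply]
  simpa using bilinearRank_le_of_isDecomp hd

end Hom

section Mono

variable {R : Type*} [CommSemiring R]

def cornerLM (R : Type*) [CommSemiring R] {n m : ℕ} (h : n ≤ m) :
    Matrix (Fin m) (Fin m) R →ₗ[R] Matrix (Fin n) (Fin n) R where
  toFun u := u.submatrix (Fin.castLE h) (Fin.castLE h)
  map_add' _ _ := rfl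
  map_smul' _ _ := rfl

@[simp] lemma cornerLM_apply {n m : ℕ} (h : n ≤ m) (u : Matrix (Fin m) (Fin m) R)
    (e f : Fin n) : cornerLM R h u e f = u (Fin.castLE h e) (Fin.castLE h f) := rfl

lemma mmrank_mono (R : Type*) [CommSemiring R] {n m : ℕ} (hnm : n ≤ m) :
    BilinearRank (matMulBil R n n n) ≤ BilinearRank (matMulBil R m m m) := by
  obtain ⟨α, β, w, hdec⟩ := exists_isDecomp_matMul R m
  have hd : IsDecomp (matMulBil R n n n)
      (fun j => (Matrix.stdBasis R (Fin n) (Fin n)).constr R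
          fun p => α j (Matrix.single (Fin.castLE hnm p.1) (Fin.castLE hnm p.2) 1))
      (fun j => (Matrix.stdBasis R (Fin n) (Fin n)).constr R
          fun p => β j (Matrix.single (Fin.castLE hnm p.1) (Fin.castLE hnm p.2) 1))
      (fun j => cornerLM R hnm (w j)) := by
    apply isDecomp_of_basis (Matrix.stdBasis R (Fin n) (Fin n))
      (Matrix.stdBasis R (Fin n) (Fin n))
    rintro ⟨a, b⟩ ⟨c, d⟩
    simp only [Module.Basis.constr_basis]
    rw [Matrix.stdBasis_eq_single, Matrix.stdBasis_eq_single,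
      matMulBil_eq_G, matMulBilG_apply]
    have hb : (Matrix.single (Fin.castLE hnm a) (Fin.castLE hnm b) 1 :
          Matrix (Fin m) (Fin m) R) *
        Matrix.single (Fin.castLE hnm c) (Fin.castLE hnm d) 1
        = ∑ j, α j (Matrix.single (Fin.castLE hnm a) (Fin.castLE hnm b) 1) •
            β j (Matrix.single (Fin.castLE hnm c) (Fin.castLE hnm d) 1) • w j :=
      hdec _ _
    have hc := congrArg (cornerLM R hnm) hb
    rw [map_sum] at hc
    simp only [_root_.map_smul] at hc
    have hcorner : cornerLM R hnm
        (Matrix.single (Fin.castLE hnm a) (Fin.castLE hnm b) 1 *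
          Matrix.single (Fin.castLE hnm c) (Fin.castLE hnm d) 1)
        = Matrix.single a b (1:R) * Matrix.single c d 1 := by
      ext e f
      rw [cornerLM_apply, stdBasisMatrix_mul_entry, stdBasisMatrix_mul_entry]
      simp [(Fin.castLE_injective hnm).eq_iff]
    rw [hcorner] at hc
    exact hc
  simpa using bilinearRank_le_of_isDecomp hd

end Mono

section Kron

open Kronecker

variable {R : Type*} [CommSemiring R]

def sliceLM (R : Type*) [CommSemiring R] {ι κ : Type*} (p q : κ) :
    Matrix (ι × κ) (ι × κ) R →ₗ[R] Matrix ι ι R where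
  toFun U := Matrix.of fun a b => U (a, p) (b, q)
  map_add' _ _ := rfl
  map_smul' _ _ := rfl

@[simp] lemma sliceLM_apply {ι κ : Type*} (p q : κ) (U : Matrix (ι × κ) (ι × κ) R)
    (a b : ι) : sliceLM R p q U a b = U (a, p) (b, q) := rfl

def collectLM {ι κ : Type*} [Fintype ι] [Fintype κ] (g : Matrix ι ι R →ₗ[R] R) :
    Matrix (ι × κ) (ι × κ) R →ₗ[R] Matrix κ κ R where
  toFun U := Matrix.of fun p q => g (sliceLM R p q U)
  map_add' U V := by
    ext p q
    simp [map_add]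
  map_smul' c U := by
    ext p q
    simp [_root_.map_smul]

@[simp] lemma collectLM_apply {ι κ : Type*} [Fintype ι] [Fintype κ]
    (g : Matrix ι ι R →ₗ[R] R) (U : Matrix (ι × κ) (ι × κ) R) (p q : κ) :
    collectLM g U p q = g (sliceLM R p q U) := rfl

lemma sliceLM_stdBasisMatrix {ι κ : Type*} [DecidableEq ι] [DecidableEq κ]
    (p₀ q₀ : κ) (a : ι) (p : κ) (b : ι) (q : κ) :
    sliceLM R p₀ q₀ (Matrix.single (a, p) (b, q) (1 : R))
      = if p = p₀ ∧ q = q₀ then Matrix.single a b 1 else 0 := by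
  ext e f
  by_cases h1 : p = p₀ <;> by_cases h2 : q = q₀ <;>
    simp [Matrix.single, Prod.ext_iff, h1, h2, and_assoc, and_comm, and_left_comm]

lemma collectLM_stdBasisMatrix {ι κ : Type*} [Fintype ι] [Fintype κ]
    [DecidableEq ι] [DecidableEq κ]
    (g : Matrix ι ι R →ₗ[R] R) (a : ι) (p : κ) (b : ι) (q : κ) :
    collectLM g (Matrix.single (a, p) (b, q) (1 : R))
      = g (Matrix.single a b 1) • Matrix.single p q (1 : R) := by
  ext p₀ q₀
  rw [Matrix.smul_apply, collectLM_apply, sliceLM_stdBasisMatrix]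
  by_cases h1 : p = p₀ <;> by_cases h2 : q = q₀ <;>
    simp [Matrix.single, h1, h2]

lemma isDecomp_kron {ιn ιm : Type*} [Fintype ιn] [Fintype ιm] [DecidableEq ιn] [DecidableEq ιm]
    {ιr ιs : Type*} [Fintype ιr] [Fintype ιs]
    {α β : ιr → (Matrix ιn ιn R →ₗ[R] R)} {w : ιr → Matrix ιn ιn R}
    {α' β' : ιs → (Matrix ιm ιm R →ₗ[R] R)} {w' : ιs → Matrix ιm ιm R}
    (h1 : IsDecomp (matMulBilG R ιn) α β w) (h2 : IsDecomp (matMulBilG R ιm) α' β' w') :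
    IsDecomp (matMulBilG R (ιn × ιm))
      (fun c : ιr × ιs => (α' c.2).comp (collectLM (α c.1)))
      (fun c : ιr × ιs => (β' c.2).comp (collectLM (β c.1)))
      (fun c : ιr × ιs => w c.1 ⊗ₖ w' c.2) := by
  apply isDecomp_of_basis (Matrix.stdBasis R (ιn × ιm) (ιn × ιm))
    (Matrix.stdBasis R (ιn × ιm) (ιn × ιm))
  rintro ⟨⟨a, p⟩, ⟨b, q⟩⟩ ⟨⟨c, r⟩, ⟨d, t⟩⟩
  rw [Matrix.stdBasis_eq_single, Matrix.stdBasis_eq_single]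
  have key1 : ∀ j : ιr × ιs,
      (α' j.2).comp (collectLM (α j.1)) (Matrix.single (a, p) (b, q) (1:R))
        = α j.1 (Matrix.single a b 1) * α' j.2 (Matrix.single p q 1) := by
    intro j
    rw [LinearMap.comp_apply, collectLM_stdBasisMatrix, _root_.map_smul, smul_eq_mul]
  have key2 : ∀ j : ιr × ιs,
      (β' j.2).comp (collectLM (β j.1)) (Matrix.single (c, r) (d, t) (1:R))
        = β j.1 (Matrix.single c d 1) * β' j.2 (Matrix.single r t 1) := by
    intro j
    rw [LinearMap.comp_apply, collectLM_stdBasisMatrix, _root_.map_smul, smul_eq_mul]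
  rw [matMulBilG_apply]
  ext ⟨a₀, p₀⟩ ⟨d₀, t₀⟩
  rw [stdBasisMatrix_mul_entry]
  have hn : (Matrix.single a b 1 * Matrix.single c d 1 :
      Matrix ιn ιn R) a₀ d₀ = ∑ j, α j (Matrix.single a b 1) *
        (β j (Matrix.single c d 1) * w j a₀ d₀) := by
    have := congrFun (congrFun (h1 (Matrix.single a b 1)
      (Matrix.single c d 1)) a₀) d₀
    rw [matMulBilG_apply] at this
    simpa [Matrix.sum_apply, Matrix.smul_apply, smul_eq_mul] using this
  have hm : (Matrix.single p q 1 * Matrix.single r t 1 :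
      Matrix ιm ιm R) p₀ t₀ = ∑ j, α' j (Matrix.single p q 1) *
        (β' j (Matrix.single r t 1) * w' j p₀ t₀) := by
    have := congrFun (congrFun (h2 (Matrix.single p q 1)
      (Matrix.single r t 1)) p₀) t₀
    rw [matMulBilG_apply] at this
    simpa [Matrix.sum_apply, Matrix.smul_apply, smul_eq_mul] using this
  rw [stdBasisMatrix_mul_entry] at hn hm
  have hrhs : (∑ j : ιr × ιs,
      ((α' j.2).comp (collectLM (α j.1)) (Matrix.single (a, p) (b, q) (1:R))) •
      ((β' j.2).comp (collectLM (β j.1)) (Matrix.single (c, r) (d, t) (1:R))) •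
      (w j.1 ⊗ₖ w' j.2)) (a₀, p₀) (d₀, t₀)
      = ∑ j : ιr × ιs,
        (α j.1 (Matrix.single a b 1) *
          (β j.1 (Matrix.single c d 1) * w j.1 a₀ d₀)) *
        (α' j.2 (Matrix.single p q 1) *
          (β' j.2 (Matrix.single r t 1) * w' j.2 p₀ t₀)) := by
    rw [Matrix.sum_apply]
    refine Finset.sum_congr rfl fun j _ => ?_
    rw [Matrix.smul_apply, Matrix.smul_apply, key1, key2, Matrix.kroneckerMap_apply,
      smul_eq_mul, smul_eq_mul]
    ring
  rw [hrhs]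
  simp only [Fintype.sum_prod_type]
  rw [← Finset.sum_mul_sum, ← hn, ← hm]
  simp only [Prod.mk.injEq, ite_and, ite_mul, one_mul, zero_mul, mul_ite, mul_one, mul_zero]
  by_cases h1 : b = c <;> by_cases h2 : q = r <;> by_cases h3 : a = a₀ <;>
    by_cases h4 : p = p₀ <;> by_cases h5 : d = d₀ <;> by_cases h6 : t = t₀ <;>
    simp [h1, h2, h3, h4, h5, h6]

lemma mmrank_mul_le (R : Type*) [CommSemiring R] (n m : ℕ) :
    BilinearRank (matMulBil R (n * m) (n * m) (n * m)) ≤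
      BilinearRank (matMulBil R n n n) * BilinearRank (matMulBil R m m m) := by
  obtain ⟨α, β, w, hdec1⟩ := exists_isDecomp_matMul R n
  obtain ⟨α', β', w', hdec2⟩ := exists_isDecomp_matMul R m
  have hdec1' : IsDecomp (matMulBilG R (Fin n)) α β w := hdec1
  have hdec2' : IsDecomp (matMulBilG R (Fin m)) α' β' w' := hdec2
  have hk := isDecomp_kron hdec1' hdec2'
  -- transport along finProdFinEquiv : Fin n × Fin m ≃ Fin (n * m)
  set e : Fin n × Fin m ≃ Fin (n * m) := finProdFinEquiv
  set Φ := Matrix.reindexLinearEquiv R R e e with hΦ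
  have hd : IsDecomp (matMulBilG R (Fin (n * m)))
      (fun c => ((fun c : _ × _ => (α' c.2).comp (collectLM (α c.1))) c).comp
        (Matrix.reindexLinearEquiv R R e.symm e.symm).toLinearMap)
      (fun c => ((fun c : _ × _ => (β' c.2).comp (collectLM (β c.1))) c).comp
        (Matrix.reindexLinearEquiv R R e.symm e.symm).toLinearMap)
      (fun c => Φ (w c.1 ⊗ₖ w' c.2)) := by
    intro U V
    have hU : Φ ((Matrix.reindexLinearEquiv R R e.symm e.symm) U) = U := by
      simp [hΦ, Matrix.reindexLinearEquiv_apply]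
    have hV : Φ ((Matrix.reindexLinearEquiv R R e.symm e.symm) V) = V := by
      simp [hΦ, Matrix.reindexLinearEquiv_apply]
    have hmul : ∀ A B : Matrix (Fin n × Fin m) (Fin n × Fin m) R,
        Φ A * Φ B = Φ (A * B) := by
      intro A B
      exact Matrix.reindexLinearEquiv_mul R R e e e A B
    have := hk ((Matrix.reindexLinearEquiv R R e.symm e.symm) U)
      ((Matrix.reindexLinearEquiv R R e.symm e.symm) V)
    rw [matMulBilG_apply] at this
    have := congrArg Φ this
    rw [map_sum] at this
    simp only [_root_.map_smul] at this
    rw [← hmul, hU, hV] at this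
    rw [matMulBilG_apply]
    exact this
  calc BilinearRank (matMulBil R (n * m) (n * m) (n * m))
      = BilinearRank (matMulBilG R (Fin (n * m))) := by rw [matMulBil_eq_G]
    _ ≤ _ := bilinearRank_le_of_isDecomp hd
    _ = BilinearRank (matMulBil R n n n) * BilinearRank (matMulBil R m m m) := by simp

end Kron

section Simulation

/-- Entrywise application of a linear map to a matrix, as a linear map. -/
def matMapLM (k : Type*) [CommSemiring k] {X Y : Type*} [AddCommMonoid X] [Module k X]
    [AddCommMonoid Y] [Module k Y] {ι κ : Type*} (g : X →ₗ[k] Y) :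
    Matrix ι κ X →ₗ[k] Matrix ι κ Y where
  toFun M := M.map g
  map_add' M N := by
    ext e f
    simp [Matrix.map_apply]
  map_smul' c M := by
    ext e f
    simp [Matrix.map_apply]

@[simp] lemma matMapLM_apply {k : Type*} [CommSemiring k] {X Y : Type*} [AddCommMonoid X]
    [Module k X] [AddCommMonoid Y] [Module k Y] {ι κ : Type*} (g : X →ₗ[k] Y)
    (M : Matrix ι κ X) (e : ι) (f : κ) : matMapLM k g M e f = g (M e f) := rfl

lemma mmrank_le_findim (k A : Type*) [Field k] [CommRing A] [Algebra k A] [Nontrivial A]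
    [FiniteDimensional k A] (m : ℕ) :
    BilinearRank (matMulBil k m m m) ≤
      (Module.finrank k A) ^ 2 * BilinearRank (matMulBil A m m m) := by
  classical
  obtain ⟨α, β, w, hdec⟩ := exists_isDecomp_matMul A m
  let bA := Module.finBasis k A
  obtain ⟨π, hπ⟩ := (Algebra.linearMap k A).exists_leftInverse_of_injective
    (LinearMap.ker_eq_bot.mpr (algebraMap k A).injective)
  let ιm : Matrix (Fin m) (Fin m) k →ₗ[k] Matrix (Fin m) (Fin m) A :=
    matMapLM k (Algebra.linearMap k A)
  let πm : Matrix (Fin m) (Fin m) A →ₗ[k] Matrix (Fin m) (Fin m) k := matMapLM k π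
  have hπ' : ∀ x : k, π (algebraMap k A x) = x := fun x => LinearMap.congr_fun hπ x
  have hπm : ∀ M : Matrix (Fin m) (Fin m) k, πm (ιm M) = M := by
    intro M
    ext e f
    simp [ιm, πm, hπ']
  have hmul : ∀ u v : Matrix (Fin m) (Fin m) k, ιm (u * v) = ιm u * ιm v := by
    intro u v
    show (u * v).map (algebraMap k A) = u.map (algebraMap k A) * v.map (algebraMap k A)
    exact Matrix.map_mul
  have hsc : ∀ x y : A, x * y = ∑ p, ∑ q, (bA.repr x p * bA.repr y q) • (bA p * bA q) := by
    intro x y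
    conv_lhs => rw [← Module.Basis.sum_repr bA x, ← Module.Basis.sum_repr bA y]
    rw [Finset.sum_mul_sum]
    exact Finset.sum_congr rfl fun p _ => Finset.sum_congr rfl fun q _ =>
      smul_mul_smul_comm _ _ _ _
  have hd : IsDecomp (matMulBil k m m m)
      (fun c : Fin (BilinearRank (matMulBil A m m m)) × Fin (Module.finrank k A) ×
          Fin (Module.finrank k A) =>
        (bA.coord c.2.1) ∘ₗ ((α c.1).restrictScalars k) ∘ₗ ιm)
      (fun c => (bA.coord c.2.2) ∘ₗ ((β c.1).restrictScalars k) ∘ₗ ιm)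
      (fun c => πm ((bA c.2.1 * bA c.2.2) • w c.1)) := by
    intro u v
    have h0 : matMulBil k m m m u v = u * v := rfl
    rw [h0]
    have hA : (ιm u) * (ιm v) = ∑ j, α j (ιm u) • β j (ιm v) • w j := hdec (ιm u) (ιm v)
    calc u * v = πm (ιm (u * v)) := (hπm _).symm
      _ = πm (ιm u * ιm v) := by rw [hmul]
      _ = ∑ j, πm ((α j (ιm u) * β j (ιm v)) • w j) := by
          rw [hA, map_sum]
          exact Finset.sum_congr rfl fun j _ => by rw [smul_smul]
      _ = ∑ j, ∑ p, ∑ q, (bA.repr (α j (ιm u)) p * bA.repr (β j (ιm v)) q) •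
            πm ((bA p * bA q) • w j) := by
          refine Finset.sum_congr rfl fun j _ => ?_
          rw [hsc (α j (ιm u)) (β j (ιm v)), Finset.sum_smul, map_sum]
          refine Finset.sum_congr rfl fun p _ => ?_
          rw [Finset.sum_smul, map_sum]
          refine Finset.sum_congr rfl fun q _ => ?_
          rw [smul_assoc, _root_.map_smul]
      _ = _ := by
          rw [Fintype.sum_prod_type]
          refine Finset.sum_congr rfl fun j _ => ?_
          rw [Fintype.sum_prod_type]
          refine Finset.sum_congr rfl fun p _ => Finset.sum_congr rfl fun q _ => ?_
          simp only [LinearMap.comp_apply, LinearMap.coe_restrictScalars, Module.Basis.coord_apply,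
            mul_smul]
  calc BilinearRank (matMulBil k m m m)
      ≤ Fintype.card (Fin (BilinearRank (matMulBil A m m m)) × Fin (Module.finrank k A) ×
          Fin (Module.finrank k A)) := bilinearRank_le_of_isDecomp hd
    _ = (Module.finrank k A) ^ 2 * BilinearRank (matMulBil A m m m) := by
        simp [Fintype.card_prod]
        ring

end Simulation

section Pow

lemma mmrank_one_le (S : Type*) [CommSemiring S] :
    BilinearRank (matMulBil S 1 1 1) ≤ 1 := by
  simpa using mmrank_le_cube S 1

lemma mmrank_pow (S : Type*) [CommSemiring S] (n s : ℕ) :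
    BilinearRank (matMulBil S (n ^ s) (n ^ s) (n ^ s)) ≤
      (BilinearRank (matMulBil S n n n)) ^ s := by
  induction s with
  | zero => simp only [pow_zero]; exact mmrank_one_le S
  | succ s ih =>
      rw [pow_succ, pow_succ]
      exact (mmrank_mul_le S (n ^ s) n).trans
        (Nat.mul_le_mul ih le_rfl)

end Pow

section Descent

set_option maxHeartbeats 2000000 in
set_option synthInstance.maxHeartbeats 1000000 in
lemma key_bound (k : Type u) [Field k] (R : Type v) [CommRing R] [Algebra k R]
    [Nontrivial R] (n : ℕ) :
    ∃ D : ℕ, 0 < D ∧ ∀ s : ℕ,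
      BilinearRank (matMulBil k (n ^ s) (n ^ s) (n ^ s)) ≤
        D * (BilinearRank (matMulBil R n n n)) ^ s := by
  classical
  obtain ⟨α, β, w, hdec⟩ := exists_isDecomp_matMul R n
  let xs : Set R :=
    (Set.range fun c : Fin (BilinearRank (matMulBil R n n n)) × Fin n × Fin n =>
      α c.1 (Matrix.single c.2.1 c.2.2 1)) ∪
    (Set.range fun c : Fin (BilinearRank (matMulBil R n n n)) × Fin n × Fin n =>
      β c.1 (Matrix.single c.2.1 c.2.2 1)) ∪
    (Set.range fun c : Fin (BilinearRank (matMulBil R n n n)) × Fin n × Fin n =>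
      w c.1 c.2.1 c.2.2)
  let B : Subalgebra k R := Algebra.adjoin k xs
  have hBfg : B.FG := by
    have hxs : xs.Finite :=
      ((Set.finite_range _).union (Set.finite_range _)).union (Set.finite_range _)
    have h2 := Subalgebra.fg_adjoin_finset (R := k) hxs.toFinset
    rwa [Set.Finite.coe_toFinset] at h2
  have hftB : Algebra.FiniteType k B := (Subalgebra.fg_iff_finiteType B).mp hBfg
  haveI : Nontrivial B := nontrivial_of_ne 1 0
    (fun h => (one_ne_zero : (1 : R) ≠ 0) (congrArg Subtype.val h))
  obtain ⟨mI, hmI⟩ := Ideal.exists_maximal B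
  haveI := hmI
  letI instS : Field (B ⧸ mI) := Ideal.Quotient.field mI
  obtain ⟨ι, hι, ψ, hψ⟩ := (Algebra.FiniteType.iff_quotient_mvPolynomial').mp hftB
  letI := hι
  let χ : MvPolynomial ι k →ₐ[k] B ⧸ mI := (Ideal.Quotient.mkₐ k mI).comp ψ
  have hχ : Function.Surjective χ := (Ideal.Quotient.mkₐ_surjective k mI).comp hψ
  have hint : (χ.toRingHom.comp MvPolynomial.C).IsIntegral :=
    MvPolynomial.comp_C_integral_of_surjective_of_isJacobsonRing χ.toRingHom hχ
  have hCeq : χ.toRingHom.comp MvPolynomial.C = algebraMap k (B ⧸ mI) := by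
    ext a
    show χ (MvPolynomial.C a) = algebraMap k (B ⧸ mI) a
    rw [← MvPolynomial.algebraMap_eq]
    exact χ.commutes a
  rw [hCeq] at hint
  haveI halg : Algebra.IsIntegral k (B ⧸ mI) := Algebra.isIntegral_def.mpr hint
  haveI hft : Algebra.FiniteType k (B ⧸ mI) :=
    Algebra.FiniteType.of_surjective χ hχ
  haveI hfd : FiniteDimensional k (B ⧸ mI) := Algebra.IsIntegral.finite
  -- membership of the coefficients in B
  have hmemα : ∀ (j) (a b : Fin n), α j (Matrix.single a b 1) ∈ B :=
    fun j a b => Algebra.subset_adjoin (Or.inl (Or.inl ⟨(j, a, b), rfl⟩))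
  have hmemβ : ∀ (j) (a b : Fin n), β j (Matrix.single a b 1) ∈ B :=
    fun j a b => Algebra.subset_adjoin (Or.inl (Or.inr ⟨(j, a, b), rfl⟩))
  have hmemw : ∀ (j) (a b : Fin n), w j a b ∈ B :=
    fun j a b => Algebra.subset_adjoin (Or.inr ⟨(j, a, b), rfl⟩)
  let mk : B →ₐ[k] B ⧸ mI := Ideal.Quotient.mkₐ k mI
  let yα : Fin (BilinearRank (matMulBil R n n n)) → Fin n → Fin n → (B ⧸ mI) :=
    fun j a b => mk ⟨α j (Matrix.single a b 1), hmemα j a b⟩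
  let yβ : Fin (BilinearRank (matMulBil R n n n)) → Fin n → Fin n → (B ⧸ mI) :=
    fun j a b => mk ⟨β j (Matrix.single a b 1), hmemβ j a b⟩
  let yw : Fin (BilinearRank (matMulBil R n n n)) → Fin n → Fin n → (B ⧸ mI) :=
    fun j a b => mk ⟨w j a b, hmemw j a b⟩
  have hd : IsDecomp (matMulBil (B ⧸ mI) n n n)
      (fun j => (Matrix.stdBasis (B ⧸ mI) (Fin n) (Fin n)).constr (B ⧸ mI)
        fun p => yα j p.1 p.2)
      (fun j => (Matrix.stdBasis (B ⧸ mI) (Fin n) (Fin n)).constr (B ⧸ mI)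
        fun p => yβ j p.1 p.2)
      (fun j => Matrix.of fun e f => yw j e f) := by
    apply isDecomp_of_basis (Matrix.stdBasis (B ⧸ mI) (Fin n) (Fin n))
      (Matrix.stdBasis (B ⧸ mI) (Fin n) (Fin n))
    rintro ⟨a, b⟩ ⟨c, d⟩
    simp only [Module.Basis.constr_basis]
    rw [Matrix.stdBasis_eq_single, Matrix.stdBasis_eq_single]
    have hR : ∀ e f : Fin n, (if b = c ∧ a = e ∧ d = f then (1:R) else 0)
        = ∑ j, α j (Matrix.single a b 1) *
            (β j (Matrix.single c d 1) * w j e f) := by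
      intro e f
      have hb : (Matrix.single a b 1 : Matrix (Fin n) (Fin n) R) *
          Matrix.single c d 1
          = ∑ j, α j (Matrix.single a b 1) •
              β j (Matrix.single c d 1) • w j := hdec _ _
      have he := congrFun (congrFun hb e) f
      rw [stdBasisMatrix_mul_entry] at he
      simpa [Matrix.sum_apply, Matrix.smul_apply, smul_eq_mul] using he
    have hB : ∀ e f : Fin n,
        (∑ j, (⟨α j (Matrix.single a b 1), hmemα j a b⟩ : B) *
          (⟨β j (Matrix.single c d 1), hmemβ j c d⟩ *
            ⟨w j e f, hmemw j e f⟩))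
        = if b = c ∧ a = e ∧ d = f then (1 : B) else 0 := by
      intro e f
      apply Subtype.coe_injective
      push_cast
      rw [← hR e f]
      rw [apply_ite (Subtype.val : B → R)]
      simp
    rw [matMulBil_eq_G, matMulBilG_apply]
    ext e f
    have hS := congrArg mk (hB e f)
    rw [map_sum] at hS
    simp only [_root_.map_mul, apply_ite mk, _root_.map_one, _root_.map_zero] at hS
    rw [stdBasisMatrix_mul_entry]
    simp only [Matrix.sum_apply, Matrix.smul_apply, smul_eq_mul, Matrix.of_apply]
    exact hS.symm
  have hSR : BilinearRank (matMulBil (B ⧸ mI) n n n) ≤ BilinearRank (matMulBil R n n n) := by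
    simpa using bilinearRank_le_of_isDecomp hd
  haveI : Nontrivial (B ⧸ mI) := instS.toNontrivial
  refine ⟨(Module.finrank k (B ⧸ mI)) ^ 2, pow_pos Module.finrank_pos 2, fun s => ?_⟩
  calc BilinearRank (matMulBil k (n ^ s) (n ^ s) (n ^ s))
      ≤ (Module.finrank k (B ⧸ mI)) ^ 2 *
          BilinearRank (matMulBil (B ⧸ mI) (n ^ s) (n ^ s) (n ^ s)) :=
        mmrank_le_findim k (B ⧸ mI) (n ^ s)
    _ ≤ (Module.finrank k (B ⧸ mI)) ^ 2 * (BilinearRank (matMulBil (B ⧸ mI) n n n)) ^ s :=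
        Nat.mul_le_mul_left _ (mmrank_pow (B ⧸ mI) n s)
    _ ≤ (Module.finrank k (B ⧸ mI)) ^ 2 * (BilinearRank (matMulBil R n n n)) ^ s :=
        Nat.mul_le_mul_left _ (Nat.pow_le_pow_left hSR s)

end Descent

section Assembly

def Sset (S : Type*) [CommSemiring S] : Set ℝ :=
  {τ : ℝ | ∃ C : ℝ, 0 < C ∧ ∀ n : ℕ, 1 ≤ n →
    (BilinearRank (matMulBil S n n n) : ℝ) ≤ C * (n : ℝ) ^ τ}

lemma mmExponent_eq_sInf (S : Type*) [CommSemiring S] : mmExponent S = sInf (Sset S) := rfl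

lemma three_mem_Sset (S : Type*) [CommSemiring S] : (3 : ℝ) ∈ Sset S := by
  refine ⟨1, one_pos, fun n hn => ?_⟩
  rw [one_mul]
  calc (BilinearRank (matMulBil S n n n) : ℝ) ≤ ((n : ℕ) : ℝ) ^ (3 : ℕ) := by
        exact_mod_cast mmrank_le_cube S n
    _ = (n : ℝ) ^ (3 : ℝ) := by
        rw [← Real.rpow_natCast]
        norm_num

lemma Sset_nonneg (S : Type*) [CommSemiring S] [Nontrivial S] : Sset S ⊆ Set.Ici 0 := by
  rintro τ ⟨C, hC, h⟩
  by_contra hτ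
  rw [Set.mem_Ici, not_le] at *
  obtain ⟨N, hN⟩ := exists_nat_gt (max 1 (C ^ (1 / (-τ))))
  have hN1 : 1 ≤ N := by
    have h1 : (1 : ℝ) < N := lt_of_le_of_lt (le_max_left _ _) hN
    exact_mod_cast h1.le
  have hNpos : (0 : ℝ) < N := by
    have : (1 : ℝ) ≤ (N : ℝ) := by exact_mod_cast hN1
    linarith
  have hCN : C < (N : ℝ) ^ (-τ) := by
    have h1 : C ^ (1 / (-τ)) < (N : ℝ) := lt_of_le_of_lt (le_max_right _ _) hN
    have h2 : (C ^ (1 / (-τ))) ^ (-τ) < (N : ℝ) ^ (-τ) :=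
      Real.rpow_lt_rpow (Real.rpow_nonneg hC.le _) h1 (by linarith)
    rwa [← Real.rpow_mul hC.le, one_div_mul_cancel (by linarith : -τ ≠ 0),
      Real.rpow_one] at h2
  have hlt : C * (N : ℝ) ^ τ < 1 := by
    have h3 := mul_lt_mul_of_pos_right hCN (Real.rpow_pos_of_pos hNpos τ)
    rwa [← Real.rpow_add hNpos, neg_add_cancel, Real.rpow_zero] at h3
  have h1 : (1 : ℝ) ≤ (BilinearRank (matMulBil S N N N) : ℝ) := by
    exact_mod_cast one_le_mmrank S hN1
  have h2 := h N hN1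
  linarith

lemma Sset_subset {S T : Type*} [CommSemiring S] [CommSemiring T]
    (h : ∀ n : ℕ, BilinearRank (matMulBil T n n n) ≤ BilinearRank (matMulBil S n n n)) :
    Sset S ⊆ Sset T := by
  rintro τ ⟨C, hC, hh⟩
  exact ⟨C, hC, fun n hn => le_trans (by exact_mod_cast h n) (hh n hn)⟩

end Assembly

end MMAux


theorem mmExponent_algebra_eq (k : Type u) [Field k] (R : Type v) [CommRing R]
    [Algebra k R] [Nontrivial R] :
    mmExponent R = mmExponent k := by
  open MMAux in
  have hBddR : BddBelow (Sset R) := ⟨0, fun x hx => Sset_nonneg R hx⟩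
  have hBddk : BddBelow (Sset k) := ⟨0, fun x hx => Sset_nonneg k hx⟩
  rw [mmExponent_eq_sInf, mmExponent_eq_sInf]
  apply le_antisymm
  · exact csInf_le_csInf hBddR ⟨3, three_mem_Sset k⟩
      (Sset_subset fun n => mmrank_le_of_ringHom (algebraMap k R) n)
  · refine le_csInf ⟨3, three_mem_Sset R⟩ ?_
    rintro τ ⟨C, hC0, hC⟩
    have hτ0 : (0 : ℝ) ≤ τ := Sset_nonneg R ⟨C, hC0, hC⟩
    refine le_of_forall_pos_le_add fun ε hε => ?_
    obtain ⟨N, hN⟩ := exists_nat_gt (max 1 (C ^ (1 / ε)))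
    have hn2 : 2 ≤ N := by
      have h1 : (1 : ℝ) < N := lt_of_le_of_lt (le_max_left _ _) hN
      have h2 : 1 < N := by exact_mod_cast h1
      omega
    have hNR : (0 : ℝ) < N := by
      have : (2 : ℝ) ≤ (N : ℝ) := by exact_mod_cast hn2
      linarith
    have hCle : C ≤ (N : ℝ) ^ ε := by
      have h1 : C ^ (1 / ε) ≤ (N : ℝ) := (le_max_right _ _).trans hN.le
      have h2 : (C ^ (1 / ε)) ^ ε ≤ (N : ℝ) ^ ε :=
        Real.rpow_le_rpow (Real.rpow_nonneg hC0.le _) h1 hε.le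
      rwa [← Real.rpow_mul hC0.le, one_div_mul_cancel hε.ne', Real.rpow_one] at h2
    have hrR : (BilinearRank (matMulBil R N N N) : ℝ) ≤ (N : ℝ) ^ (τ + ε) := by
      calc (BilinearRank (matMulBil R N N N) : ℝ) ≤ C * (N : ℝ) ^ τ := hC N (by omega)
        _ ≤ (N : ℝ) ^ ε * (N : ℝ) ^ τ :=
            mul_le_mul_of_nonneg_right hCle (Real.rpow_nonneg hNR.le τ)
        _ = (N : ℝ) ^ (τ + ε) := by
            rw [← Real.rpow_add hNR]
            ring_nf
    obtain ⟨D, hD0, hDb⟩ := key_bound k R N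
    have hmem : (τ + ε) ∈ Sset k := by
      refine ⟨(D : ℝ) * (N : ℝ) ^ (τ + ε), by positivity, fun M hM => ?_⟩
      set s := Nat.log N M with hs
      have hle1 : M ≤ N ^ (s + 1) := (Nat.lt_pow_succ_log_self (by omega) M).le
      have hle2 : N ^ s ≤ M := Nat.pow_log_le_self N (by omega)
      have hk1 : BilinearRank (matMulBil k M M M) ≤
          BilinearRank (matMulBil k (N ^ (s + 1)) (N ^ (s + 1)) (N ^ (s + 1))) :=
        mmrank_mono k hle1
      have hk2 := hDb (s + 1)
      have hreal : (BilinearRank (matMulBil k M M M) : ℝ) ≤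
          (D : ℝ) * ((BilinearRank (matMulBil R N N N) : ℝ)) ^ (s + 1) := by
        exact_mod_cast hk1.trans hk2
      have h3 : ((BilinearRank (matMulBil R N N N) : ℝ)) ^ (s + 1) ≤
          ((N : ℝ) ^ (τ + ε)) ^ (s + 1) :=
        pow_le_pow_left₀ (by positivity) hrR (s + 1)
      have h4 : ((N : ℝ) ^ (τ + ε)) ^ (s + 1) = ((N : ℝ) ^ ((s :ℕ) + 1 : ℕ)) ^ (τ + ε) := by
        rw [← Real.rpow_natCast ((N : ℝ) ^ (τ + ε)) (s + 1), ← Real.rpow_mul hNR.le,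
          mul_comm, Real.rpow_mul hNR.le, Real.rpow_natCast]
      have h5 : ((N : ℝ) ^ ((s : ℕ) + 1 : ℕ)) ^ (τ + ε) ≤ ((N : ℝ) * M) ^ (τ + ε) := by
        apply Real.rpow_le_rpow (by positivity) ?_ (by linarith)
        have hexp : ((N : ℝ) ^ ((s : ℕ) + 1 : ℕ)) = (N : ℝ) ^ (s : ℕ) * N := by ring
        rw [hexp]
        have hcast : ((N : ℝ) ^ (s : ℕ)) ≤ (M : ℝ) := by exact_mod_cast hle2
        calc (N : ℝ) ^ (s : ℕ) * N ≤ (M : ℝ) * N :=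
              mul_le_mul_of_nonneg_right hcast hNR.le
          _ = (N : ℝ) * M := mul_comm _ _
      have h6 : ((N : ℝ) * M) ^ (τ + ε) = (N : ℝ) ^ (τ + ε) * (M : ℝ) ^ (τ + ε) :=
        Real.mul_rpow hNR.le (by positivity)
      calc (BilinearRank (matMulBil k M M M) : ℝ)
          ≤ (D : ℝ) * (((N : ℝ) ^ (τ + ε)) ^ (s + 1)) :=
            hreal.trans (mul_le_mul_of_nonneg_left h3 (by positivity))
        _ ≤ (D : ℝ) * ((N : ℝ) ^ (τ + ε) * (M : ℝ) ^ (τ + ε)) := by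
            rw [h4] at *
            refine mul_le_mul_of_nonneg_left ?_ (by positivity)
            rw [← h6]
            exact h5
        _ = ((D : ℝ) * (N : ℝ) ^ (τ + ε)) * (M : ℝ) ^ (τ + ε) := by ring
    exact csInf_le hBddk hmem
end
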